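/- arXiv:1203.4020 — 5 statements merged into one kernel-verified Lean document; each statement's English description precedes it below -/
import Mathlib

section
/- There exists a function c₁ : (0,∞) → (0,∞) with c₁(β) → 0 as β → ∞ such that for every β > 0 and every x ∈ [0,∞) with |x − 1| ≥ β, one has |x − 1| ≤ c₁(β)·l(x), where l(x) = x·log x − x + 1. -/
/-- `l(r) = r·log r − r + 1` (note `Real.log 0 = 0` in Mathlib, so `ell 0 = 1`). -/
noncomputable def ell (r : ℝ) : ℝ := r * Real.log r - r + 1

lemma ell_ge_sq (x : ℝ) (hx : 0 ≤ x) : (Real.sqrt x - 1)^2 ≤ ell x := by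
  rcases eq_or_lt_of_le hx with h | h
  · simp [ell, ← h]
  · set s := Real.sqrt x with hs
    have hs0 : 0 < s := Real.sqrt_pos.mpr h
    have hss : s * s = x := Real.mul_self_sqrt hx
    have hlog : Real.log x = 2 * Real.log s := by
      rw [← hss, Real.log_mul (ne_of_gt hs0) (ne_of_gt hs0)]; ring
    have h1 : Real.log s⁻¹ ≤ s⁻¹ - 1 := Real.log_le_sub_one_of_pos (inv_pos.mpr hs0)
    rw [Real.log_inv] at h1
    have h2 : 1 - s⁻¹ ≤ Real.log s := by linarith
    have h3 : s * (1 - s⁻¹) = s - 1 := by field_simp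
    have h4 : s - 1 ≤ s * Real.log s := by
      nlinarith [mul_le_mul_of_nonneg_left h2 hs0.le]
    unfold ell
    rw [hlog]
    nlinarith [hss]

lemma ell_ge_lin (x : ℝ) (hx : 1 ≤ x) : (x - 1) * (Real.log x - 1) ≤ ell x := by
  have : Real.log x ≥ 0 := Real.log_nonneg hx
  unfold ell; nlinarith

lemma ell_nonneg (x : ℝ) (hx : 0 ≤ x) : 0 ≤ ell x :=
  le_trans (sq_nonneg _) (ell_ge_sq x hx)

/-- There exists `c₁ : (0,∞) → (0,∞)` with `c₁(β) → 0` as `β → ∞`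
such that for every `β > 0` and every `x ∈ [0,∞)` with `|x − 1| ≥ β`,
`|x − 1| ≤ c₁(β)·l(x)`. -/
theorem exists_c1_abs_sub_one_le_mul_ell :
    ∃ c₁ : ℝ → ℝ, (∀ β : ℝ, 0 < β → 0 < c₁ β) ∧
      Filter.Tendsto c₁ Filter.atTop (nhds 0) ∧
      ∀ β : ℝ, 0 < β → ∀ x : ℝ, 0 ≤ x → β ≤ |x - 1| → |x - 1| ≤ c₁ β * ell x := by
  refine ⟨fun β => if Real.log (1 + β) ≤ 2 then 4 + 8/β else 1/(Real.log (1 + β) - 1) + 8/β,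
    ?_, ?_, ?_⟩
  · intro β hβ
    by_cases h : Real.log (1 + β) ≤ 2 <;> simp only [h, if_true, if_false, if_pos, if_neg,
      not_false_iff]
    · positivity
    · push_neg at h
      have : 0 < Real.log (1 + β) - 1 := by linarith
      positivity
  · -- tendsto
    have h1 : Filter.Tendsto (fun β : ℝ => Real.log (1 + β) - 1) Filter.atTop Filter.atTop := by
      apply Filter.tendsto_atTop_add_const_right
      exact Real.tendsto_log_atTop.comp (Filter.tendsto_atTop_add_const_left _ 1 Filter.tendsto_id)
    have h2 : Filter.Tendsto (fun β : ℝ => 1/(Real.log (1 + β) - 1) + 8/β)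
        Filter.atTop (nhds 0) := by
      have ha := (tendsto_inv_atTop_zero).comp h1
      have hb : Filter.Tendsto (fun β : ℝ => 8/β) Filter.atTop (nhds 0) := by
        simpa [div_eq_mul_inv] using (tendsto_inv_atTop_zero : Filter.Tendsto (fun x:ℝ => x⁻¹) Filter.atTop (nhds 0)).const_mul (8:ℝ)
      simpa [one_div, Function.comp] using ha.add hb
    apply h2.congr'
    filter_upwards [Filter.eventually_gt_atTop (Real.exp 2 - 1)] with β hβ
    have : (2:ℝ) < Real.log (1 + β) := by
      have h0 : Real.exp 2 < 1 + β := by linarith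
      calc (2:ℝ) = Real.log (Real.exp 2) := (Real.log_exp 2).symm
        _ < Real.log (1 + β) := Real.log_lt_log (Real.exp_pos 2) h0
    rw [if_neg (not_le.mpr this)]
  · intro β hβ x hx habs
    have hl : 0 ≤ ell x := ell_nonneg x hx
    have hsq := ell_ge_sq x hx
    rcases le_or_gt x 1 with hx1 | hx1
    · -- x ≤ 1
      have habs' : |x - 1| = 1 - x := by rw [abs_sub_comm, abs_of_nonneg (by linarith)]
      rw [habs'] at habs ⊢
      have hβ1 : β ≤ 1 := by nlinarith
      have hs1 : Real.sqrt x ≤ 1 := by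
        rw [show (1:ℝ) = Real.sqrt 1 by simp]; exact Real.sqrt_le_sqrt hx1
      have hss : Real.sqrt x * Real.sqrt x = x := Real.mul_self_sqrt hx
      have hs0 : 0 ≤ Real.sqrt x := Real.sqrt_nonneg x
      -- (1-x)^2 ≤ 4 * ell x
      have key : (1 - x)^2 ≤ 4 * ell x := by nlinarith [hsq]
      -- so 1 - x ≤ (4/β) * ell x
      have h4 : 1 - x ≤ (4/β) * ell x := by
        rw [div_mul_eq_mul_div, le_div_iff₀ hβ]
        nlinarith
      have hc : 4/β ≤ if Real.log (1 + β) ≤ 2 then 4 + 8/β else 1/(Real.log (1 + β) - 1) + 8/β := by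
        have h48 : (4:ℝ)/β ≤ 8/β := by
          rw [div_le_div_iff₀ hβ hβ]; nlinarith
        by_cases h : Real.log (1 + β) ≤ 2 <;> simp only [h, if_true, if_false, if_pos, if_neg,
          not_false_iff]
        · linarith
        · push_neg at h
          have : 0 < 1/(Real.log (1 + β) - 1) := by
            apply div_pos one_pos; linarith
          linarith
      calc 1 - x ≤ (4/β) * ell x := h4
        _ ≤ _ := mul_le_mul_of_nonneg_right hc hl
    · -- x > 1
      have habs' : |x - 1| = x - 1 := abs_of_pos (by linarith)
      rw [habs'] at habs ⊢
      have hxβ : 1 + β ≤ x := by linarith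
      by_cases h : Real.log (1 + β) ≤ 2
      · simp only []
        rw [if_pos h]
        have hss : Real.sqrt x * Real.sqrt x = x := Real.mul_self_sqrt hx
        have hs1 : 1 ≤ Real.sqrt x := by
          rw [show (1:ℝ) = Real.sqrt 1 by simp]; exact Real.sqrt_le_sqrt (by linarith)
        -- 4 x * ell x ≥ (x-1)^2
        have key : (x - 1)^2 ≤ 4 * x * ell x := by nlinarith [hsq]
        -- β (x-1) ≤ (4β+4) ell x
        have key2 : β * (x - 1) ≤ (4*β + 4) * ell x := by nlinarith [key, habs, hl]
        rw [show (4 + 8/β) * ell x = ((4*β + 8) * ell x)/β by field_simp,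
          le_div_iff₀ hβ]
        nlinarith
      · simp only []
        rw [if_neg h]
        push_neg at h
        have hlog : Real.log (1 + β) ≤ Real.log x := Real.log_le_log (by linarith) hxβ
        have hlin := ell_ge_lin x (by linarith)
        have hpos : 0 < Real.log (1 + β) - 1 := by linarith
        have h8 : 0 ≤ 8/β * ell x := by positivity
        have : (x - 1) * (Real.log (1 + β) - 1) ≤ ell x := by nlinarith
        have hmain : x - 1 ≤ 1/(Real.log (1 + β) - 1) * ell x := by
          rw [div_mul_eq_mul_div, le_div_iff₀ hpos]; linarith
        calc x - 1 ≤ 1/(Real.log (1 + β) - 1) * ell x := hmain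
          _ ≤ _ := by rw [add_mul]; linarith
end

section
/- Let (Z, 𝒵, μ) be a σ-finite measure space, let h : Z → [0,∞) be measurable with ∫_Z h² dμ < ∞, and suppose there exists δ₁ ∈ (0,∞) such that ∫_E e^{δ₁·h(z)²} μ(dz) < ∞ for every measurable set E with μ(E) < ∞. Then for every M ∈ ℕ, the supremum over all g ∈ S^M of ∫_Z h(z)²·(g(z) + 1) μ(dz) is finite; that is, sup_{g ∈ S^M} ∫_Z h²·(g+1) dμ < ∞. -/
open MeasureTheory
open scoped ENNReal

lemma ell_nonneg_s4 {r : ℝ} (hr : 0 ≤ r) : 0 ≤ ell r := by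
  rcases eq_or_lt_of_le hr with h0 | h0
  · simp [ell, ← h0]
  · have h1 : Real.log (1 / r) ≤ 1 / r - 1 := Real.log_le_sub_one_of_pos (by positivity)
    rw [Real.log_div one_ne_zero (ne_of_gt h0), Real.log_one] at h1
    have h2 : r * (0 - Real.log r) ≤ r * (1 / r - 1) :=
      mul_le_mul_of_nonneg_left (by simpa using h1) hr
    have h3 : r * (1 / r) = 1 := by field_simp
    unfold ell; nlinarith

lemma young_exp {a b : ℝ} (_ : 0 ≤ a) (hb : 0 ≤ b) :
    a * b ≤ (Real.exp a - 1) + ell b := by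
  rcases eq_or_lt_of_le hb with h0 | h0
  · simp [ell, ← h0]
    positivity
  · have h1 : (a - Real.log b) + 1 ≤ Real.exp (a - Real.log b) :=
      Real.add_one_le_exp _
    have h2 : b * ((a - Real.log b) + 1) ≤ b * Real.exp (a - Real.log b) :=
      mul_le_mul_of_nonneg_left h1 hb
    have h3 : b * Real.exp (a - Real.log b) = Real.exp a := by
      rw [Real.exp_sub, Real.exp_log h0]; field_simp
    unfold ell; nlinarith

/-- Let `(Z, μ)` be σ-finite, `h : Z → [0,∞)` measurable with
`∫ h² dμ < ∞`, and suppose there is `δ₁ ∈ (0,∞)` such that `∫_E e^{δ₁ h²} dμ < ∞`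
for every measurable `E` of finite measure.  Then for every `M ∈ ℕ`,
`sup_{g ∈ S^M} ∫ h²·(g+1) dμ < ∞`, where `S^M` is the set of measurable
`g : Z → [0,∞)` with `∫ l(g) dμ ≤ M`. -/
theorem sup_integral_sq_mul_control_add_one_lt_top
    {Z : Type*} [MeasurableSpace Z] (μ : Measure Z) [SigmaFinite μ]
    (h : Z → ℝ) (hmeas : Measurable h) (hnonneg : ∀ z, 0 ≤ h z)
    (hL2 : ∫⁻ z, ENNReal.ofReal (h z ^ 2) ∂μ < ⊤)
    (hexp : ∃ δ₁ : ℝ, 0 < δ₁ ∧ ∀ E : Set Z, MeasurableSet E → μ E < ⊤ →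
      ∫⁻ z in E, ENNReal.ofReal (Real.exp (δ₁ * h z ^ 2)) ∂μ < ⊤)
    (M : ℕ) :
    ∃ C : ℝ≥0∞, C < ⊤ ∧ ∀ g : Z → ℝ, Measurable g → (∀ z, 0 ≤ g z) →
      (∫⁻ z, ENNReal.ofReal (ell (g z)) ∂μ ≤ (M : ℝ≥0∞)) →
      ∫⁻ z, ENNReal.ofReal (h z ^ 2 * (g z + 1)) ∂μ ≤ C := by
  obtain ⟨δ₁, hδ, hEδ⟩ := hexp
  -- measurability facts
  have hmsq : Measurable fun z => ENNReal.ofReal (h z ^ 2) :=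
    ((hmeas.pow_const 2)).ennreal_ofReal
  have hmexp : Measurable fun z => ENNReal.ofReal (Real.exp (δ₁ * h z ^ 2) - 1) :=
    ((Real.measurable_exp.comp ((hmeas.pow_const 2).const_mul δ₁)).sub
      measurable_const).ennreal_ofReal
  -- the set where h ≥ 1 has finite measure
  set E : Set Z := {z | 1 ≤ h z} with hEdef
  have hEmeas : MeasurableSet E := measurableSet_le measurable_const hmeas
  have hEfin : μ E < ⊤ := by
    have : μ E = ∫⁻ z in E, 1 ∂μ := by simp
    rw [this]
    calc ∫⁻ z in E, 1 ∂μ ≤ ∫⁻ z in E, ENNReal.ofReal (h z ^ 2) ∂μ := by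
          apply setLIntegral_mono hmsq
          intro z hz
          exact ENNReal.one_le_ofReal.mpr (one_le_pow₀ hz)
      _ ≤ ∫⁻ z, ENNReal.ofReal (h z ^ 2) ∂μ := setLIntegral_le_lintegral _ _
      _ < ⊤ := hL2
  -- K := ∫ (exp(δ₁ h²) - 1) is finite
  set K : ℝ≥0∞ := ∫⁻ z, ENNReal.ofReal (Real.exp (δ₁ * h z ^ 2) - 1) ∂μ with hKdef
  have hK : K < ⊤ := by
    rw [hKdef, ← lintegral_add_compl _ hEmeas]
    have h1 : ∫⁻ z in E, ENNReal.ofReal (Real.exp (δ₁ * h z ^ 2) - 1) ∂μ < ⊤ := by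
      refine lt_of_le_of_lt ?_ (hEδ E hEmeas hEfin)
      exact setLIntegral_mono ((Real.measurable_exp.comp
        ((hmeas.pow_const 2).const_mul δ₁)).ennreal_ofReal)
        (fun z _ => ENNReal.ofReal_le_ofReal (by linarith [Real.exp_pos (δ₁ * h z ^ 2)]))
    have h2 : ∫⁻ z in Eᶜ, ENNReal.ofReal (Real.exp (δ₁ * h z ^ 2) - 1) ∂μ < ⊤ := by
      have hb : ∀ z ∈ Eᶜ, ENNReal.ofReal (Real.exp (δ₁ * h z ^ 2) - 1) ≤
          ENNReal.ofReal (δ₁ * Real.exp δ₁) * ENNReal.ofReal (h z ^ 2) := by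
        intro z hz
        have hz1 : h z < 1 := by simpa [hEdef] using hz
        have hx0 : 0 ≤ δ₁ * h z ^ 2 := by positivity
        have hsq : h z ^ 2 ≤ 1 := by nlinarith [hnonneg z, hz1]
        have hxδ : δ₁ * h z ^ 2 ≤ δ₁ := by nlinarith [hsq, hδ]
        rw [← ENNReal.ofReal_mul (by positivity)]
        apply ENNReal.ofReal_le_ofReal
        -- exp x - 1 ≤ x * exp x ≤ x * exp δ₁
        have e1 : 1 - (δ₁ * h z ^ 2) ≤ Real.exp (-(δ₁ * h z ^ 2)) := by
          linarith [Real.add_one_le_exp (-(δ₁ * h z ^ 2))]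
        have e2 : Real.exp (δ₁ * h z ^ 2) * (1 - (δ₁ * h z ^ 2)) ≤ 1 := by
          have := mul_le_mul_of_nonneg_left e1 (le_of_lt (Real.exp_pos (δ₁ * h z ^ 2)))
          rwa [← Real.exp_add, add_neg_cancel, Real.exp_zero] at this
        have e3 : Real.exp (δ₁ * h z ^ 2) ≤ Real.exp δ₁ := Real.exp_le_exp.mpr hxδ
        have e4 : Real.exp (δ₁ * h z ^ 2) - 1 ≤ (δ₁ * h z ^ 2) * Real.exp (δ₁ * h z ^ 2) := by
          nlinarith
        calc Real.exp (δ₁ * h z ^ 2) - 1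
            ≤ (δ₁ * h z ^ 2) * Real.exp (δ₁ * h z ^ 2) := e4
          _ ≤ (δ₁ * h z ^ 2) * Real.exp δ₁ := mul_le_mul_of_nonneg_left e3 hx0
          _ = δ₁ * Real.exp δ₁ * h z ^ 2 := by ring
      calc ∫⁻ z in Eᶜ, ENNReal.ofReal (Real.exp (δ₁ * h z ^ 2) - 1) ∂μ
          ≤ ∫⁻ z in Eᶜ, ENNReal.ofReal (δ₁ * Real.exp δ₁) * ENNReal.ofReal (h z ^ 2) ∂μ :=
            setLIntegral_mono (hmsq.const_mul _) hb
        _ = ENNReal.ofReal (δ₁ * Real.exp δ₁) * ∫⁻ z in Eᶜ, ENNReal.ofReal (h z ^ 2) ∂μ :=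
            lintegral_const_mul _ hmsq
        _ ≤ ENNReal.ofReal (δ₁ * Real.exp δ₁) * ∫⁻ z, ENNReal.ofReal (h z ^ 2) ∂μ :=
            mul_le_mul_right (setLIntegral_le_lintegral _ _) _
        _ < ⊤ := ENNReal.mul_lt_top ENNReal.ofReal_lt_top hL2
    exact ENNReal.add_lt_top.mpr ⟨h1, h2⟩
  refine ⟨(∫⁻ z, ENNReal.ofReal (h z ^ 2) ∂μ) + ENNReal.ofReal δ₁⁻¹ * (K + M), ?_, ?_⟩
  · exact ENNReal.add_lt_top.mpr ⟨hL2, ENNReal.mul_lt_top ENNReal.ofReal_lt_top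
      (ENNReal.add_lt_top.mpr ⟨hK, ENNReal.natCast_lt_top M⟩)⟩
  · intro g hgmeas hgnn hgM
    have hmell : Measurable fun z => ENNReal.ofReal (ell (g z)) := by
      unfold ell
      exact (((hgmeas.mul (Real.measurable_log.comp hgmeas)).sub hgmeas).add
        measurable_const).ennreal_ofReal
    have key : ∀ z, ENNReal.ofReal (h z ^ 2 * (g z + 1)) ≤
        ENNReal.ofReal (h z ^ 2) +
        (ENNReal.ofReal δ₁⁻¹ * ENNReal.ofReal (Real.exp (δ₁ * h z ^ 2) - 1) +
         ENNReal.ofReal δ₁⁻¹ * ENNReal.ofReal (ell (g z))) := by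
      intro z
      have hy : (δ₁ * h z ^ 2) * g z ≤ (Real.exp (δ₁ * h z ^ 2) - 1) + ell (g z) :=
        young_exp (by positivity) (hgnn z)
      have hpoint : h z ^ 2 * (g z + 1) ≤
          h z ^ 2 + (δ₁⁻¹ * (Real.exp (δ₁ * h z ^ 2) - 1) + δ₁⁻¹ * ell (g z)) := by
        have := mul_le_mul_of_nonneg_left hy (le_of_lt (inv_pos.mpr hδ))
        have hδ' : δ₁⁻¹ * (δ₁ * h z ^ 2 * g z) = h z ^ 2 * g z := by
          field_simp
        nlinarith [this]
      calc ENNReal.ofReal (h z ^ 2 * (g z + 1))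
          ≤ ENNReal.ofReal (h z ^ 2 +
              (δ₁⁻¹ * (Real.exp (δ₁ * h z ^ 2) - 1) + δ₁⁻¹ * ell (g z))) :=
            ENNReal.ofReal_le_ofReal hpoint
        _ ≤ ENNReal.ofReal (h z ^ 2) +
              (ENNReal.ofReal δ₁⁻¹ * ENNReal.ofReal (Real.exp (δ₁ * h z ^ 2) - 1) +
               ENNReal.ofReal δ₁⁻¹ * ENNReal.ofReal (ell (g z))) := by
            refine le_trans (ENNReal.ofReal_add_le) (add_le_add_right ?_ _)
            refine le_trans (ENNReal.ofReal_add_le) (add_le_add ?_ ?_) <;>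
              rw [← ENNReal.ofReal_mul (by positivity)]
    calc ∫⁻ z, ENNReal.ofReal (h z ^ 2 * (g z + 1)) ∂μ
        ≤ ∫⁻ z, (ENNReal.ofReal (h z ^ 2) +
            (ENNReal.ofReal δ₁⁻¹ * ENNReal.ofReal (Real.exp (δ₁ * h z ^ 2) - 1) +
             ENNReal.ofReal δ₁⁻¹ * ENNReal.ofReal (ell (g z)))) ∂μ :=
          lintegral_mono key
      _ = (∫⁻ z, ENNReal.ofReal (h z ^ 2) ∂μ) +
            (ENNReal.ofReal δ₁⁻¹ * K + ENNReal.ofReal δ₁⁻¹ *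
              ∫⁻ z, ENNReal.ofReal (ell (g z)) ∂μ) := by
          rw [lintegral_add_left hmsq, lintegral_add_left (hmexp.const_mul _),
            lintegral_const_mul _ hmexp, lintegral_const_mul _ hmell]
      _ ≤ (∫⁻ z, ENNReal.ofReal (h z ^ 2) ∂μ) + ENNReal.ofReal δ₁⁻¹ * (K + M) := by
          rw [mul_add]
          exact add_le_add_right (add_le_add_right (mul_le_mul_right hgM _) _) _
end

section
/- Let T > 0, let (X, 𝒳, ν) be a σ-finite measure space, and let ν_T = λ_T ⊗ ν on [0,T] × X, where λ_T is Lebesgue measure on [0,T]. Let h : [0,T] × X → [0,∞) be measurable with ∫ h² dν_T < ∞, and suppose there exists δ₁ ∈ (0,∞) such that ∫_E e^{δ₁·h(s,v)²} ν_T(ds dv) < ∞ for every measurable E ⊆ [0,T] × X with ν_T(E) < ∞. Then for every M ∈ ℕ, lim_{δ → 0} sup_{g ∈ S^M} sup_{0 ≤ s ≤ t ≤ T, t − s ≤ δ} ∫_{[s,t] × X} h(r,v)·|g(r,v) − 1| ν(dv) dr = 0. -/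
open MeasureTheory Set
open scoped ENNReal

/-- `ν_T = λ_T ⊗ ν` on `[0,T] × X`, with `λ_T` Lebesgue measure on `[0,T]`. -/
noncomputable def nuT {X : Type*} [MeasurableSpace X] (T : ℝ) (ν : Measure X) :
    Measure (ℝ × X) := (volume.restrict (Icc 0 T)).prod ν

lemma sq_sqrt_sub_one_le_ell {b : ℝ} (hb : 0 ≤ b) : (Real.sqrt b - 1) ^ 2 ≤ ell b := by
  rcases eq_or_lt_of_le hb with hb0 | hb0
  · simp [← hb0, ell]
  · have hs : 0 < Real.sqrt b := Real.sqrt_pos.2 hb0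
    have hlog : Real.log (Real.sqrt b)⁻¹ ≤ (Real.sqrt b)⁻¹ - 1 :=
      Real.log_le_sub_one_of_pos (by positivity)
    rw [Real.log_inv] at hlog
    have h2 : 1 - (Real.sqrt b)⁻¹ ≤ Real.log (Real.sqrt b) := by linarith
    have hlb : Real.log b = 2 * Real.log (Real.sqrt b) := by
      rw [Real.log_sqrt hb]; ring
    have hss : Real.sqrt b ^ 2 = b := Real.sq_sqrt hb
    have hbs : b * (Real.sqrt b)⁻¹ = Real.sqrt b := by
      rw [← hss]; field_simp; rw [Real.sqrt_sq hs.le]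
    have h3 := mul_le_mul_of_nonneg_left h2 hb
    unfold ell
    rw [hlb]
    nlinarith [sq_nonneg (Real.sqrt b - 1)]

lemma ell_nonneg_s6 {b : ℝ} (hb : 0 ≤ b) : 0 ≤ ell b :=
  le_trans (sq_nonneg _) (sq_sqrt_sub_one_le_ell hb)

lemma young_ell (a : ℝ) {b : ℝ} (hb : 0 ≤ b) : a * b ≤ Real.exp a + ell b := by
  rcases eq_or_lt_of_le hb with hb0 | hb0
  · simp [← hb0, ell]
    positivity
  · have h1 : (a - Real.log b) + 1 ≤ Real.exp (a - Real.log b) := Real.add_one_le_exp _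
    have h2 : Real.exp (a - Real.log b) * b = Real.exp a := by
      rw [Real.exp_sub, Real.exp_log hb0]; field_simp
    have := mul_le_mul_of_nonneg_right h1 hb
    unfold ell
    nlinarith

lemma sq_sub_one_le_ell {b Λ : ℝ} (hb : 0 ≤ b) (hΛ : b ≤ Λ) :
    (b - 1) ^ 2 ≤ (Real.sqrt Λ + 1) ^ 2 * ell b := by
  have h1 := sq_sqrt_sub_one_le_ell hb
  have hss : Real.sqrt b ^ 2 = b := Real.sq_sqrt hb
  have hsm : Real.sqrt b ≤ Real.sqrt Λ := Real.sqrt_le_sqrt hΛ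
  have hsn : 0 ≤ Real.sqrt b := Real.sqrt_nonneg b
  have key : (b - 1) ^ 2 = (Real.sqrt b - 1) ^ 2 * (Real.sqrt b + 1) ^ 2 := by
    nlinarith
  rw [key]
  have h4 : (Real.sqrt b + 1) ^ 2 ≤ (Real.sqrt Λ + 1) ^ 2 := by nlinarith
  calc (Real.sqrt b - 1) ^ 2 * (Real.sqrt b + 1) ^ 2
      ≤ ell b * (Real.sqrt Λ + 1) ^ 2 :=
        mul_le_mul h1 h4 (by positivity) (ell_nonneg_s6 hb)
    _ = (Real.sqrt Λ + 1) ^ 2 * ell b := by ring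

lemma ell_lower_log {b Λ : ℝ} (hb : 0 ≤ b) (hΛ : 0 < Λ) (hbΛ : Λ ≤ b) :
    b * (Real.log Λ - 1) ≤ ell b := by
  have hlog : Real.log Λ ≤ Real.log b := Real.log_le_log hΛ hbΛ
  have := mul_le_mul_of_nonneg_left hlog hb
  unfold ell; linarith

set_option maxHeartbeats 1000000 in
/-- Under square integrability and exponential integrability of `h ≥ 0`
with respect to `ν_T = λ_T ⊗ ν`, for every `M ∈ ℕ`:
`lim_{δ → 0} sup_{g ∈ S^M} sup_{0 ≤ s ≤ t ≤ T, t−s ≤ δ} ∫_{[s,t]×X} h·|g−1| dν_T = 0`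
(stated in ε-δ form). -/
theorem uniform_small_time_integral_control
    {X : Type*} [MeasurableSpace X] (T : ℝ) (hT : 0 < T)
    (ν : Measure X) [SigmaFinite ν]
    (h : ℝ × X → ℝ) (hmeas : Measurable h) (hnonneg : ∀ p, 0 ≤ h p)
    (hL2 : ∫⁻ p, ENNReal.ofReal (h p ^ 2) ∂(nuT T ν) < ⊤)
    (hexp : ∃ δ₁ : ℝ, 0 < δ₁ ∧ ∀ E : Set (ℝ × X), MeasurableSet E → nuT T ν E < ⊤ →
      ∫⁻ p in E, ENNReal.ofReal (Real.exp (δ₁ * h p ^ 2)) ∂(nuT T ν) < ⊤)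
    (M : ℕ) :
    ∀ ε : ℝ, 0 < ε → ∃ δ : ℝ, 0 < δ ∧
      ∀ g : ℝ × X → ℝ, Measurable g → (∀ p, 0 ≤ g p) →
        (∫⁻ p, ENNReal.ofReal (ell (g p)) ∂(nuT T ν) ≤ (M : ℝ≥0∞)) →
        ∀ s t : ℝ, 0 ≤ s → s ≤ t → t ≤ T → t - s ≤ δ →
          ∫⁻ p in Icc s t ×ˢ (univ : Set X),
              ENNReal.ofReal (h p * |g p - 1|) ∂(nuT T ν) ≤ ENNReal.ofReal ε := by
  intro ε hε
  obtain ⟨δ₁, hδ₁, hexp'⟩ := hexp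
  set μ : Measure (ℝ × X) := nuT T ν with hμdef
  haveI : SFinite μ := by rw [hμdef]; unfold nuT; infer_instance
  -- the square-integrand
  set f : ℝ × X → ℝ≥0∞ := fun p => ENNReal.ofReal (h p ^ 2) with hfdef
  have hfmeas : Measurable f := (hmeas.pow_const 2).ennreal_ofReal
  -- the set where h ≥ 1 has finite measure
  set E₁ : Set (ℝ × X) := {p | 1 ≤ h p} with hE₁def
  have hE₁meas : MeasurableSet E₁ := measurableSet_le measurable_const hmeas
  have hE₁fin : μ E₁ < ⊤ := by
    have : μ E₁ = ∫⁻ _ in E₁, 1 ∂μ := (setLIntegral_one E₁).symm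
    rw [this]
    refine lt_of_le_of_lt ?_ hL2
    refine le_trans (setLIntegral_mono hfmeas ?_) (setLIntegral_le_lintegral _ _)
    intro p hp
    have hp' : (1:ℝ) ≤ h p := hp
    have : (1:ℝ) ≤ h p ^ 2 := by nlinarith [hp']
    calc (1:ℝ≥0∞) = ENNReal.ofReal 1 := by simp
      _ ≤ ENNReal.ofReal (h p ^ 2) := ENNReal.ofReal_le_ofReal this
  set K : ℝ≥0∞ := ∫⁻ p in E₁, ENNReal.ofReal (Real.exp (δ₁ * h p ^ 2)) ∂μ with hKdef
  have hK : K < ⊤ := hexp' E₁ hE₁meas hE₁fin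
  set Kr : ℝ := K.toReal with hKrdef
  have hKr0 : 0 ≤ Kr := ENNReal.toReal_nonneg
  have hKeq : K = ENNReal.ofReal Kr := (ENNReal.ofReal_toReal hK.ne).symm
  -- choose constants
  set σ : ℝ := max δ₁ ((Kr + M + 1) * (4 / ε)) with hσdef
  have hσpos : 0 < σ := lt_of_lt_of_le hδ₁ (le_max_left _ _)
  set β : ℝ := σ / δ₁ with hβdef
  have hσge : δ₁ ≤ σ := by rw [hσdef]; exact le_max_left _ _
  have hσge2 : (Kr + M + 1) * (4 / ε) ≤ σ := by rw [hσdef]; exact le_max_right _ _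
  have hβ1 : 1 ≤ β := (le_div_iff₀ hδ₁).2 (by linarith)
  have hβpos : 0 < β := lt_of_lt_of_le one_pos hβ1
  set Λ : ℝ := Real.exp (2 + β * (M + 1) * (4 / ε)) with hΛdef
  have hΛpos : 0 < Λ := Real.exp_pos _
  have hΛlog : Real.log Λ = 2 + β * (M + 1) * (4 / ε) := Real.log_exp _
  have hΛ1 : 1 ≤ Λ := by
    rw [hΛdef, ← Real.exp_zero]
    apply Real.exp_le_exp.2
    positivity
  set c : ℝ := (Real.sqrt Λ + 1) ^ 2 with hcdef
  have hc : 0 < c := by positivity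
  set η : ℝ := (ε / 2) ^ 2 / (c * (M + 1)) with hηdef
  have hη : 0 < η := by positivity
  -- the pushforward measure on ℝ
  set ρ : Measure ℝ := Measure.map Prod.fst (μ.withDensity f) with hρdef
  have hρ_apply : ∀ A : Set ℝ, MeasurableSet A →
      ρ A = ∫⁻ p in A ×ˢ (univ : Set X), f p ∂μ := by
    intro A hA
    rw [hρdef, Measure.map_apply measurable_fst hA,
      withDensity_apply _ (measurable_fst hA)]
    rw [Set.prod_univ]
  have hac : ρ ≪ volume := by
    refine Measure.AbsolutelyContinuous.mk ?_
    intro A hA hA0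
    rw [hρ_apply A hA]
    have hμA : μ (A ×ˢ (univ : Set X)) = 0 := by
      rw [hμdef]
      unfold nuT
      rw [Measure.prod_prod]
      have : volume.restrict (Icc 0 T) A = 0 := by
        rw [Measure.restrict_apply hA]
        exact measure_mono_null inter_subset_left hA0
      rw [this, zero_mul]
    rw [Measure.restrict_eq_zero.2 hμA, lintegral_zero_measure]
  haveI : IsFiniteMeasure ρ := by
    constructor
    have h1 := hρ_apply univ MeasurableSet.univ
    rw [univ_prod_univ] at h1
    rw [h1]
    exact lt_of_le_of_lt (setLIntegral_le_lintegral _ _) hL2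
  have hrn_ne_top : ∫⁻ x, ρ.rnDeriv volume x ∂volume ≠ ⊤ := by
    rw [Measure.lintegral_rnDeriv hac]
    exact (measure_lt_top ρ univ).ne
  obtain ⟨δ₀, hδ₀pos, hδ₀⟩ := exists_pos_setLIntegral_lt_of_measure_lt
    (μ := (volume : Measure ℝ)) hrn_ne_top
    (ε := ENNReal.ofReal η) (ne_of_gt (ENNReal.ofReal_pos.2 hη))
  -- pick a real δ with ofReal δ < δ₀
  obtain ⟨δ, hδpos, hδlt⟩ : ∃ δ : ℝ, 0 < δ ∧ ENNReal.ofReal δ < δ₀ := by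
    rcases eq_or_ne δ₀ ⊤ with hd | hd
    · exact ⟨1, one_pos, by simp [hd]⟩
    · have htr : 0 < δ₀.toReal := ENNReal.toReal_pos hδ₀pos.ne' hd
      refine ⟨δ₀.toReal / 2, by linarith, ?_⟩
      rw [ENNReal.ofReal_lt_iff_lt_toReal (by linarith) hd]
      linarith
  refine ⟨δ, hδpos, ?_⟩
  intro g hgm hgnn hgent s t hs0 hst htT hts
  -- the strip has small f-integral
  have hstrip : ∫⁻ p in Icc s t ×ˢ (univ : Set X), f p ∂μ ≤ ENNReal.ofReal η := by
    rw [← hρ_apply _ measurableSet_Icc, ← Measure.setLIntegral_rnDeriv hac]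
    refine le_of_lt (hδ₀ _ ?_)
    rw [Real.volume_Icc]
    exact lt_of_le_of_lt (ENNReal.ofReal_le_ofReal hts) hδlt
  set S : Set (ℝ × X) := Icc s t ×ˢ (univ : Set X) with hSdef
  have hS : MeasurableSet S := measurableSet_Icc.prod MeasurableSet.univ
  set B1 : Set (ℝ × X) := {p | g p ≤ Λ} with hB1def
  set B2 : Set (ℝ × X) := {p | Λ < g p} ∩ {p | h p < β} with hB2def
  set B3 : Set (ℝ × X) := {p | Λ < g p} ∩ {p | β ≤ h p} with hB3def
  have hB1 : MeasurableSet B1 := measurableSet_le hgm measurable_const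
  have hB2 : MeasurableSet B2 :=
    (measurableSet_lt measurable_const hgm).inter (measurableSet_lt hmeas measurable_const)
  have hB3 : MeasurableSet B3 :=
    (measurableSet_lt measurable_const hgm).inter (measurableSet_le measurable_const hmeas)
  set φ : ℝ × X → ℝ≥0∞ := fun p => ENNReal.ofReal (h p * |g p - 1|) with hφdef
  have hφm : Measurable φ := (hmeas.mul ((hgm.sub measurable_const).abs)).ennreal_ofReal
  have hptsplit : ∀ p, φ p ≤ B1.indicator φ p + (B2.indicator φ p + B3.indicator φ p) := by
    intro p
    by_cases h1 : g p ≤ Λ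
    · have hmem : p ∈ B1 := h1
      have he : B1.indicator φ p = φ p := indicator_of_mem hmem _
      rw [he]; exact le_self_add
    · have h1' : Λ < g p := lt_of_not_ge h1
      by_cases h2 : h p < β
      · have hmem : p ∈ B2 := ⟨h1', h2⟩
        have he : B2.indicator φ p = φ p := indicator_of_mem hmem _
        calc φ p ≤ B2.indicator φ p + B3.indicator φ p := by rw [he]; exact le_self_add
          _ ≤ _ := le_add_self
      · have hmem : p ∈ B3 := ⟨h1', le_of_not_gt h2⟩
        have he : B3.indicator φ p = φ p := indicator_of_mem hmem _
        calc φ p ≤ B2.indicator φ p + B3.indicator φ p := by rw [he]; exact le_add_self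
          _ ≤ _ := le_add_self
  -- Region 1 bound (Cauchy–Schwarz)
  have bound1 : ∫⁻ p in B1 ∩ S, φ p ∂μ ≤ ENNReal.ofReal (ε/2) := by
    calc ∫⁻ p in B1 ∩ S, φ p ∂μ
        = ∫⁻ p, ((fun q => ENNReal.ofReal (h q)) * fun q => ENNReal.ofReal |g q - 1|) p
            ∂(μ.restrict (B1 ∩ S)) :=
          lintegral_congr fun p => ENNReal.ofReal_mul (hnonneg p)
      _ ≤ (∫⁻ p, ENNReal.ofReal (h p) ^ (2:ℝ) ∂(μ.restrict (B1 ∩ S))) ^ ((1:ℝ)/2) *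
          (∫⁻ p, ENNReal.ofReal |g p - 1| ^ (2:ℝ) ∂(μ.restrict (B1 ∩ S))) ^ ((1:ℝ)/2) :=
          ENNReal.lintegral_mul_le_Lp_mul_Lq _ ⟨by norm_num, by norm_num, by norm_num⟩
            hmeas.ennreal_ofReal.aemeasurable
            ((hgm.sub measurable_const).abs.ennreal_ofReal.aemeasurable)
      _ ≤ (ENNReal.ofReal η) ^ ((1:ℝ)/2) * (ENNReal.ofReal c * (M:ℝ≥0∞)) ^ ((1:ℝ)/2) := by
          refine mul_le_mul' (ENNReal.rpow_le_rpow ?_ (by norm_num))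
            (ENNReal.rpow_le_rpow ?_ (by norm_num))
          · have heq : ∀ p, ENNReal.ofReal (h p) ^ (2:ℝ) = f p := by
              intro p
              rw [show ((2:ℝ)) = ((2:ℕ):ℝ) by norm_num, ENNReal.rpow_natCast,
                ← ENNReal.ofReal_pow (hnonneg p)]
            calc ∫⁻ p, ENNReal.ofReal (h p) ^ (2:ℝ) ∂(μ.restrict (B1 ∩ S))
                = ∫⁻ p in B1 ∩ S, f p ∂μ := lintegral_congr heq
              _ ≤ ∫⁻ p in S, f p ∂μ := lintegral_mono_set inter_subset_right
              _ ≤ ENNReal.ofReal η := hstrip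
          · have heq : ∀ p, ENNReal.ofReal |g p - 1| ^ (2:ℝ) = ENNReal.ofReal ((g p - 1)^2) := by
              intro p
              rw [show ((2:ℝ)) = ((2:ℕ):ℝ) by norm_num, ENNReal.rpow_natCast,
                ← ENNReal.ofReal_pow (abs_nonneg _), sq_abs]
            calc ∫⁻ p, ENNReal.ofReal |g p - 1| ^ (2:ℝ) ∂(μ.restrict (B1 ∩ S))
                = ∫⁻ p in B1 ∩ S, ENNReal.ofReal ((g p - 1)^2) ∂μ := lintegral_congr heq
              _ ≤ ∫⁻ p in B1 ∩ S, ENNReal.ofReal (c * ell (g p)) ∂μ :=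
                  setLIntegral_mono' (hB1.inter hS) fun p hp =>
                    ENNReal.ofReal_le_ofReal (sq_sub_one_le_ell (hgnn p) hp.1)
              _ = ∫⁻ p in B1 ∩ S, ENNReal.ofReal c * ENNReal.ofReal (ell (g p)) ∂μ :=
                  lintegral_congr fun p => ENNReal.ofReal_mul hc.le
              _ = ENNReal.ofReal c * ∫⁻ p in B1 ∩ S, ENNReal.ofReal (ell (g p)) ∂μ :=
                  lintegral_const_mul' _ _ ENNReal.ofReal_ne_top
              _ ≤ ENNReal.ofReal c * M :=
                  mul_le_mul_right (le_trans (setLIntegral_le_lintegral _ _) hgent) _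
      _ ≤ ENNReal.ofReal (ε/2) := by
          rw [← ENNReal.mul_rpow_of_nonneg _ _ (by norm_num : (0:ℝ) ≤ 1/2)]
          have hle : ENNReal.ofReal η * (ENNReal.ofReal c * (M:ℝ≥0∞))
              ≤ ENNReal.ofReal ((ε/2)^2) := by
            rw [← ENNReal.ofReal_natCast M, ← ENNReal.ofReal_mul hc.le,
              ← ENNReal.ofReal_mul hη.le]
            apply ENNReal.ofReal_le_ofReal
            have hkey : η * (c * (M+1)) = (ε/2)^2 := by
              rw [hηdef]; field_simp
            nlinarith [hη.le, hc.le]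
          refine le_trans (ENNReal.rpow_le_rpow hle (by norm_num)) ?_
          have hrr : (((ε/2)^2 : ℝ)) ^ ((1:ℝ)/2) = ε/2 := by
            rw [← Real.rpow_natCast (ε/2) 2, ← Real.rpow_mul (by linarith)]
            norm_num
          rw [ENNReal.ofReal_rpow_of_nonneg (by positivity) (by norm_num), hrr]
  -- Region 2 bound
  have hDpos : 0 < Real.log Λ - 1 := by
    have : 0 < β * (M + 1) * (4 / ε) := by positivity
    rw [hΛlog]; linarith
  have bound2 : ∫⁻ p in B2 ∩ S, φ p ∂μ ≤ ENNReal.ofReal (ε/4) := by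
    have hpt : ∀ p ∈ B2 ∩ S, φ p ≤
        ENNReal.ofReal (β / (Real.log Λ - 1)) * ENNReal.ofReal (ell (g p)) := by
      rintro p ⟨⟨hpg, hph⟩, -⟩
      have hg0 := hgnn p; have hh0 := hnonneg p
      have hg1 : 1 < g p := lt_of_le_of_lt hΛ1 hpg
      have habs : |g p - 1| = g p - 1 := abs_of_nonneg (by linarith)
      have h2 : g p * (Real.log Λ - 1) ≤ ell (g p) := ell_lower_log hg0 hΛpos hpg.le
      have h4 : h p * |g p - 1| ≤ (β / (Real.log Λ - 1)) * ell (g p) := by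
        have hge := mul_le_mul_of_nonneg_left h2
          (div_nonneg hβpos.le hDpos.le)
        have e1 : h p * (g p - 1) ≤ h p * g p := by nlinarith
        have e2 : h p * g p ≤ β * g p := mul_le_mul_of_nonneg_right hph.le hg0
        calc h p * |g p - 1| ≤ β * g p := by rw [habs]; linarith
          _ = (β / (Real.log Λ - 1)) * (g p * (Real.log Λ - 1)) := by field_simp
          _ ≤ (β / (Real.log Λ - 1)) * ell (g p) := hge
      calc φ p ≤ ENNReal.ofReal ((β / (Real.log Λ - 1)) * ell (g p)) :=
            ENNReal.ofReal_le_ofReal h4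
        _ = _ := ENNReal.ofReal_mul (div_nonneg hβpos.le hDpos.le)
    calc ∫⁻ p in B2 ∩ S, φ p ∂μ
        ≤ ∫⁻ p in B2 ∩ S, ENNReal.ofReal (β / (Real.log Λ - 1)) *
            ENNReal.ofReal (ell (g p)) ∂μ := setLIntegral_mono' (hB2.inter hS) hpt
      _ = ENNReal.ofReal (β / (Real.log Λ - 1)) *
            ∫⁻ p in B2 ∩ S, ENNReal.ofReal (ell (g p)) ∂μ :=
          lintegral_const_mul' _ _ ENNReal.ofReal_ne_top
      _ ≤ ENNReal.ofReal (β / (Real.log Λ - 1)) * (M:ℝ≥0∞) :=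
          mul_le_mul_right (le_trans (setLIntegral_le_lintegral _ _) hgent) _
      _ ≤ ENNReal.ofReal (ε/4) := by
          rw [← ENNReal.ofReal_natCast M,
            ← ENNReal.ofReal_mul (div_nonneg hβpos.le hDpos.le)]
          apply ENNReal.ofReal_le_ofReal
          rw [div_mul_eq_mul_div, div_le_iff₀ hDpos]
          have hid : ε * (β * (M + 1) * (4 / ε)) = 4 * (β * (M + 1)) := by
            field_simp
          rw [hΛlog]
          nlinarith [hβpos.le, hε.le, Nat.cast_nonneg (α := ℝ) M]
  -- Region 3 bound
  have bound3 : ∫⁻ p in B3 ∩ S, φ p ∂μ ≤ ENNReal.ofReal (ε/4) := by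
    have hpt : ∀ p ∈ B3 ∩ S, φ p ≤ ENNReal.ofReal σ⁻¹ *
        (ENNReal.ofReal (Real.exp (δ₁ * h p ^ 2)) + ENNReal.ofReal (ell (g p))) := by
      rintro p ⟨⟨hpg, hph⟩, -⟩
      have hg0 := hgnn p; have hh0 := hnonneg p
      have hg1 : 1 < g p := lt_of_le_of_lt hΛ1 hpg
      have habs : |g p - 1| = g p - 1 := abs_of_nonneg (by linarith)
      have h2 : (σ * h p) * g p ≤ Real.exp (σ * h p) + ell (g p) := young_ell _ hg0
      have h3 : Real.exp (σ * h p) ≤ Real.exp (δ₁ * h p ^ 2) := by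
        apply Real.exp_le_exp.2
        have hσβ : σ = δ₁ * β := by rw [hβdef]; field_simp
        rw [hσβ]
        nlinarith [mul_le_mul_of_nonneg_left hph (mul_nonneg hδ₁.le hh0)]
      have h4 : h p * |g p - 1| ≤ σ⁻¹ * (Real.exp (δ₁ * h p ^ 2) + ell (g p)) := by
        have hinv : (0:ℝ) ≤ σ⁻¹ := inv_nonneg.2 hσpos.le
        have hstep := mul_le_mul_of_nonneg_left h2 hinv
        calc h p * |g p - 1| ≤ h p * g p := by rw [habs]; nlinarith
          _ = σ⁻¹ * ((σ * h p) * g p) := by field_simp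
          _ ≤ σ⁻¹ * (Real.exp (σ * h p) + ell (g p)) := hstep
          _ ≤ σ⁻¹ * (Real.exp (δ₁ * h p ^ 2) + ell (g p)) := by nlinarith
      calc φ p ≤ ENNReal.ofReal (σ⁻¹ * (Real.exp (δ₁ * h p ^ 2) + ell (g p))) :=
            ENNReal.ofReal_le_ofReal h4
        _ = _ := by
            rw [ENNReal.ofReal_mul (inv_nonneg.2 hσpos.le),
              ENNReal.ofReal_add (Real.exp_nonneg _) (ell_nonneg_s6 hg0)]
    calc ∫⁻ p in B3 ∩ S, φ p ∂μ
        ≤ ∫⁻ p in B3 ∩ S, ENNReal.ofReal σ⁻¹ *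
            (ENNReal.ofReal (Real.exp (δ₁ * h p ^ 2)) + ENNReal.ofReal (ell (g p))) ∂μ :=
          setLIntegral_mono' (hB3.inter hS) hpt
      _ = ENNReal.ofReal σ⁻¹ * ∫⁻ p in B3 ∩ S,
            (ENNReal.ofReal (Real.exp (δ₁ * h p ^ 2)) + ENNReal.ofReal (ell (g p))) ∂μ :=
          lintegral_const_mul' _ _ ENNReal.ofReal_ne_top
      _ = ENNReal.ofReal σ⁻¹ *
            ((∫⁻ p in B3 ∩ S, ENNReal.ofReal (Real.exp (δ₁ * h p ^ 2)) ∂μ) +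
             ∫⁻ p in B3 ∩ S, ENNReal.ofReal (ell (g p)) ∂μ) := by
          rw [lintegral_add_left
            (show Measurable fun p : ℝ × X => ENNReal.ofReal (Real.exp (δ₁ * h p ^ 2)) from
              (measurable_const.mul (hmeas.pow_const 2)).exp.ennreal_ofReal)]
      _ ≤ ENNReal.ofReal σ⁻¹ * (K + (M:ℝ≥0∞)) := by
          refine mul_le_mul_right (add_le_add ?_ ?_) _
          · rw [hKdef]
            refine lintegral_mono_set ?_
            rintro p ⟨⟨hpg, hph⟩, -⟩
            exact le_trans hβ1 hph
          · exact le_trans (setLIntegral_le_lintegral _ _) hgent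
      _ ≤ ENNReal.ofReal (ε/4) := by
          rw [hKeq, ← ENNReal.ofReal_natCast M, ← ENNReal.ofReal_add hKr0 (Nat.cast_nonneg M),
            ← ENNReal.ofReal_mul (inv_nonneg.2 hσpos.le)]
          apply ENNReal.ofReal_le_ofReal
          rw [inv_mul_le_iff₀ hσpos]
          have h4ε : (4/ε) * (ε/4) = 1 := by field_simp
          have hmul := mul_le_mul_of_nonneg_right hσge2
            (le_of_lt (by positivity : (0:ℝ) < ε/4))
          nlinarith [hKr0]
  -- assemble
  calc ∫⁻ p in S, φ p ∂μ
      ≤ ∫⁻ p in S, (B1.indicator φ p + (B2.indicator φ p + B3.indicator φ p)) ∂μ :=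
        setLIntegral_mono' hS fun p _ => hptsplit p
    _ = (∫⁻ p in S, B1.indicator φ p ∂μ) +
        ((∫⁻ p in S, B2.indicator φ p ∂μ) + ∫⁻ p in S, B3.indicator φ p ∂μ) := by
        rw [lintegral_add_left (hφm.indicator hB1), lintegral_add_left (hφm.indicator hB2)]
    _ = (∫⁻ p in B1 ∩ S, φ p ∂μ) +
        ((∫⁻ p in B2 ∩ S, φ p ∂μ) + ∫⁻ p in B3 ∩ S, φ p ∂μ) := by
        rw [lintegral_indicator hB1, lintegral_indicator hB2, lintegral_indicator hB3,
          Measure.restrict_restrict hB1, Measure.restrict_restrict hB2,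
          Measure.restrict_restrict hB3]
    _ ≤ ENNReal.ofReal (ε/2) + (ENNReal.ofReal (ε/4) + ENNReal.ofReal (ε/4)) :=
        add_le_add bound1 (add_le_add bound2 bound3)
    _ = ENNReal.ofReal ε := by
        rw [← ENNReal.ofReal_add (by linarith) (by linarith),
          ← ENNReal.ofReal_add (by linarith) (by linarith)]
        congr 1
        ring
end

section
/- Let T > 0, d ∈ ℕ, and let (X, 𝒳, ν) be a σ-finite measure space. Let a : [0,T] × ℝ^d → ℝ^d and g : [0,T] × ℝ^d × X → ℝ^d be measurable, and suppose there exists κ ∈ (0,∞) with 2⟨a(s,y), y⟩ ≤ κ·(1 + ‖y‖²) for all (s,y) ∈ [0,T] × ℝ^d. Let ψ : [0,T] × X → [0,∞) be measurable and set f(s) = ∫_X ‖g(s,v)‖₀·|ψ(s,v) − 1| ν(dv), where ‖g(s,v)‖₀ = sup_{y ∈ ℝ^d} ‖g(s,y,v)‖ / (1 + ‖y‖); suppose ∫_0^T f(s) ds < ∞. If x : [0,T] → ℝ^d is continuous and satisfies x(t) = x₀ + ∫_0^t a(s, x(s)) ds + ∫_0^t ∫_X g(s, x(s), v)·(ψ(s,v)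 − 1) ν(dv) ds for all t ∈ [0,T], then sup_{t ∈ [0,T]} ‖x(t)‖² ≤ (‖x₀‖² + κT + 2∫_0^T f(s) ds)·exp(κT + 4∫_0^T f(s) ds). -/
open MeasureTheory Set
open scoped ENNReal RealInnerProductSpace

/-- `‖g(s,v)‖₀ = sup_{y} ‖g(s,y,v)‖ / (1 + ‖y‖)`, as an extended nonnegative real. -/
noncomputable def gNorm0 {X : Type*} (d : ℕ)
    (g : ℝ × EuclideanSpace ℝ (Fin d) × X → EuclideanSpace ℝ (Fin d))
    (s : ℝ) (v : X) : ℝ≥0∞ :=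
  ⨆ y : EuclideanSpace ℝ (Fin d), ENNReal.ofReal (‖g (s, y, v)‖ / (1 + ‖y‖))

lemma gronwall_cont {T C : ℝ} (u φ : ℝ → ℝ) (hu : Continuous u) (hφc : Continuous φ)
    (hφnn : ∀ s, 0 ≤ φ s)
    (H : ∀ t ∈ Icc (0:ℝ) T, u t ≤ C + ∫ s in (0:ℝ)..t, φ s * u s) :
    ∀ t ∈ Icc (0:ℝ) T, u t ≤ C * Real.exp (∫ s in (0:ℝ)..t, φ s) := by
  intro t ht
  set w : ℝ → ℝ := fun r => C + ∫ s in (0:ℝ)..r, φ s * u s with hw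
  set Φ : ℝ → ℝ := fun r => ∫ s in (0:ℝ)..r, φ s with hΦ
  have hwd : ∀ r, HasDerivAt w (φ r * u r) r := by
    intro r
    have := (intervalIntegral.integral_hasDerivAt_right
      ((hφc.mul hu).intervalIntegrable 0 r)
      ((hφc.mul hu).stronglyMeasurable.stronglyMeasurableAtFilter)
      (hφc.mul hu).continuousAt)
    exact (this.const_add C)
  have hΦd : ∀ r, HasDerivAt Φ (φ r) r := by
    intro r
    exact (intervalIntegral.integral_hasDerivAt_right
      (hφc.intervalIntegrable 0 r)
      (hφc.stronglyMeasurable.stronglyMeasurableAtFilter)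
      hφc.continuousAt)
  set z : ℝ → ℝ := fun r => w r * Real.exp (-Φ r) with hz
  have hzd : ∀ r, HasDerivAt z ((φ r * u r - φ r * w r) * Real.exp (-Φ r)) r := by
    intro r
    have h1 : HasDerivAt (fun r => Real.exp (-Φ r)) (-φ r * Real.exp (-Φ r)) r := by
      have := ((hΦd r).neg).exp
      convert this using 1
      · rfl
      · simp only [Pi.neg_apply]; ring
    have := (hwd r).mul h1
    have e : (φ r * u r - φ r * w r) * Real.exp (-Φ r)
        = φ r * u r * Real.exp (-Φ r) + w r * (-φ r * Real.exp (-Φ r)) := by ring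
    rw [e]; exact this
  have hanti : AntitoneOn z (Icc 0 T) := by
    apply antitoneOn_of_deriv_nonpos (convex_Icc 0 T)
    · exact Continuous.continuousOn (continuous_iff_continuousAt.2
        (fun r => ((hzd r).differentiableAt).continuousAt))
    · intro r hr
      exact ((hzd r).differentiableAt).differentiableWithinAt
    · intro r hr
      rw [interior_Icc] at hr
      rw [(hzd r).deriv]
      have hur : u r ≤ w r := H r ⟨le_of_lt hr.1, le_of_lt hr.2⟩
      have : φ r * u r - φ r * w r ≤ 0 := by nlinarith [hφnn r]
      exact mul_nonpos_of_nonpos_of_nonneg this (Real.exp_nonneg _)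
  have h0 : z t ≤ z 0 := hanti (left_mem_Icc.2 (ht.1.trans ht.2)) ht ht.1
  have hz0 : z 0 = C := by simp [hz, hw, hΦ]
  rw [hz0] at h0
  have hexp : (0:ℝ) < Real.exp (-Φ t) := Real.exp_pos _
  have : w t ≤ C * Real.exp (Φ t) := by
    have := mul_le_mul_of_nonneg_right h0 (le_of_lt (Real.exp_pos (Φ t)))
    rwa [mul_assoc, ← Real.exp_add, neg_add_cancel, Real.exp_zero, mul_one] at this
  exact le_trans (H t ht) this

lemma gronwall_int {T C : ℝ} (hT : 0 ≤ T) (hC : 0 ≤ C) (u φ : ℝ → ℝ) (hu : Continuous u)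
    (hunn : ∀ s, 0 ≤ u s) (hφ : IntegrableOn φ (Icc 0 T)) (hφnn : ∀ s, 0 ≤ φ s)
    (H : ∀ t ∈ Icc (0:ℝ) T, u t ≤ C + ∫ s in (0:ℝ)..t, φ s * u s) :
    ∀ t ∈ Icc (0:ℝ) T, u t ≤ C * Real.exp (∫ s in (0:ℝ)..t, φ s) := by
  -- bound for u on [0,T]
  obtain ⟨M, hM⟩ := isCompact_Icc.exists_bound_of_continuousOn
    (hu.continuousOn : ContinuousOn u (Icc (0:ℝ) T))
  have hM0 : 0 ≤ M := le_trans (norm_nonneg _) (hM 0 (left_mem_Icc.2 hT))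
  have hMu : ∀ s ∈ Icc (0:ℝ) T, u s ≤ M := fun s hs =>
    le_trans (le_abs_self _) (hM s hs)
  -- indicator version of φ
  set φ0 : ℝ → ℝ := (Icc (0:ℝ) T).indicator φ with hφ0
  have hφ0int : Integrable φ0 := (integrable_indicator_iff measurableSet_Icc).2 hφ
  have hφ0nn : ∀ s, 0 ≤ φ0 s := fun s => by
    by_cases h : s ∈ Icc (0:ℝ) T <;> simp [hφ0, indicator, h, hφnn s]
  have hφ0eq : ∀ r ∈ Icc (0:ℝ) T, ∀ s ∈ uIcc (0:ℝ) r, φ0 s = φ s := by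
    intro r hr s hs
    rw [uIcc_of_le hr.1] at hs
    exact indicator_of_mem (Icc_subset_Icc le_rfl hr.2 hs) φ
  have hΦ0t : ∀ r ∈ Icc (0:ℝ) T,
      (∫ s in (0:ℝ)..r, φ0 s) = ∫ s in (0:ℝ)..r, φ s := fun r hr =>
    intervalIntegral.integral_congr (fun s hs => hφ0eq r hr s hs)
  -- interval integrability of products with u
  have humeas : AEStronglyMeasurable u (volume : Measure ℝ) := hu.aestronglyMeasurable
  have hui : ∀ (f : ℝ → ℝ), Integrable f → ∀ r ∈ Icc (0:ℝ) T,
      IntervalIntegrable (fun s => f s * u s) volume 0 r := by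
    intro f hf r hr
    rw [intervalIntegrable_iff_integrableOn_Ioc_of_le hr.1]
    have : IntegrableOn (fun s => u s * f s) (Ioc 0 r) := by
      apply Integrable.bdd_mul (c := M) hf.integrableOn humeas.restrict
      refine (ae_restrict_iff' measurableSet_Ioc).2 (Filter.Eventually.of_forall ?_)
      intro s hs
      rw [Real.norm_eq_abs, abs_of_nonneg (hunn s)]
      exact hMu s (Icc_subset_Icc le_rfl hr.2 (Ioc_subset_Icc_self hs))
    exact this.congr_fun (fun s _ => mul_comm (u s) (f s)) measurableSet_Ioc
  intro t ht
  -- the ε-approximation claim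
  have key : ∀ ε : ℝ, 0 < ε →
      u t ≤ (C + ε * M) * Real.exp ((∫ s in (0:ℝ)..t, φ s) + ε) := by
    intro ε hε
    obtain ⟨G, -, hGint, hGcont, hGinteg⟩ :=
      hφ0int.exists_hasCompactSupport_integral_sub_le hε
    set ψc : ℝ → ℝ := fun s => max (G s) 0 with hψc
    have hψccont : Continuous ψc := hGcont.max continuous_const
    have hψcnn : ∀ s, 0 ≤ ψc s := fun s => le_max_right _ _
    have hψcint : Integrable ψc :=
      hGinteg.abs.mono' hψccont.aestronglyMeasurable
        (Filter.Eventually.of_forall fun s => by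
          simp only [hψc, Real.norm_eq_abs]
          rw [abs_of_nonneg (le_max_right _ _)]
          exact max_le (le_abs_self _) (abs_nonneg _))
    have hdiff : ∀ s, |φ0 s - ψc s| ≤ ‖φ0 s - G s‖ := by
      intro s
      rw [Real.norm_eq_abs]
      rcases le_or_gt 0 (G s) with h | h
      · simp [hψc, max_eq_left h]
      · have h1 : ψc s = 0 := max_eq_right h.le
        rw [h1, sub_zero, abs_of_nonneg (hφ0nn s),
          abs_of_nonneg (by linarith [hφ0nn s] : (0:ℝ) ≤ φ0 s - G s)]
        linarith
    have hdint' : Integrable (fun s => |φ0 s - ψc s|) := (hφ0int.sub hψcint).abs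
    have hint_diff : (∫ s, |φ0 s - ψc s|) ≤ ε := by
      refine le_trans (integral_mono hdint' (hφ0int.sub hGinteg).norm
        (fun s => hdiff s)) ?_
      exact hGint
    -- interval integral of |φ0 - ψc| is at most ε
    have hId : ∀ r ∈ Icc (0:ℝ) T, (∫ s in (0:ℝ)..r, |φ0 s - ψc s|) ≤ ε := by
      intro r hr
      rw [intervalIntegral.integral_of_le hr.1]
      refine le_trans (setIntegral_le_integral hdint'
        (Filter.Eventually.of_forall fun s => abs_nonneg _)) hint_diff
    -- Grönwall hypothesis for ψc
    have H' : ∀ r ∈ Icc (0:ℝ) T, u r ≤ (C + ε * M) + ∫ s in (0:ℝ)..r, ψc s * u s := by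
      intro r hr
      have e1 : (∫ s in (0:ℝ)..r, φ s * u s) = ∫ s in (0:ℝ)..r, φ0 s * u s :=
        intervalIntegral.integral_congr (fun s hs => by rw [hφ0eq r hr s hs])
      have e2 : (∫ s in (0:ℝ)..r, φ0 s * u s)
          ≤ (∫ s in (0:ℝ)..r, ψc s * u s) + ε * M := by
        have hsub : (∫ s in (0:ℝ)..r, φ0 s * u s) - (∫ s in (0:ℝ)..r, ψc s * u s)
            = ∫ s in (0:ℝ)..r, (φ0 s * u s - ψc s * u s) :=
          (intervalIntegral.integral_sub (hui φ0 hφ0int r hr) (hui ψc hψcint r hr)).symm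
        have hmono : (∫ s in (0:ℝ)..r, (φ0 s * u s - ψc s * u s))
            ≤ ∫ s in (0:ℝ)..r, |φ0 s - ψc s| * M := by
          apply intervalIntegral.integral_mono_on hr.1
            ((hui φ0 hφ0int r hr).sub (hui ψc hψcint r hr))
            (hdint'.intervalIntegrable.mul_const M)
          intro s hs
          have hsM := hMu s (Icc_subset_Icc le_rfl hr.2 hs)
          have : φ0 s * u s - ψc s * u s = (φ0 s - ψc s) * u s := by ring
          rw [this]
          calc (φ0 s - ψc s) * u s ≤ |φ0 s - ψc s| * u s :=
                mul_le_mul_of_nonneg_right (le_abs_self _) (hunn s)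
            _ ≤ |φ0 s - ψc s| * M :=
                mul_le_mul_of_nonneg_left hsM (abs_nonneg _)
        have hId' : (∫ s in (0:ℝ)..r, |φ0 s - ψc s| * M)
            = (∫ s in (0:ℝ)..r, |φ0 s - ψc s|) * M := by
          rw [← intervalIntegral.integral_mul_const]
        have : (∫ s in (0:ℝ)..r, |φ0 s - ψc s|) * M ≤ ε * M :=
          mul_le_mul_of_nonneg_right (hId r hr) hM0
        linarith [hsub, hmono, hId'.symm]
      calc u r ≤ C + ∫ s in (0:ℝ)..r, φ s * u s := H r hr
        _ = C + ∫ s in (0:ℝ)..r, φ0 s * u s := by rw [e1]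
        _ ≤ (C + ε * M) + ∫ s in (0:ℝ)..r, ψc s * u s := by linarith [e2]
    have h2 := gronwall_cont u ψc hu hψccont hψcnn H' t ht
    -- ∫ ψc ≤ ∫ φ + ε
    have h3 : (∫ s in (0:ℝ)..t, ψc s) ≤ (∫ s in (0:ℝ)..t, φ s) + ε := by
      have e4 : (∫ s in (0:ℝ)..t, ψc s) - (∫ s in (0:ℝ)..t, φ0 s)
          = ∫ s in (0:ℝ)..t, (ψc s - φ0 s) :=
        (intervalIntegral.integral_sub
          (hψcint.intervalIntegrable)
          (hφ0int.intervalIntegrable)).symm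
      have e5 : (∫ s in (0:ℝ)..t, (ψc s - φ0 s)) ≤ ∫ s in (0:ℝ)..t, |φ0 s - ψc s| := by
        apply intervalIntegral.integral_mono_on ht.1
          ((hψcint.intervalIntegrable).sub (hφ0int.intervalIntegrable))
          hdint'.intervalIntegrable
        intro s _
        rw [abs_sub_comm]
        exact le_abs_self _
      have := hId t ht
      have := hΦ0t t ht
      linarith
    calc u t ≤ (C + ε * M) * Real.exp (∫ s in (0:ℝ)..t, ψc s) := h2
      _ ≤ (C + ε * M) * Real.exp ((∫ s in (0:ℝ)..t, φ s) + ε) := by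
          apply mul_le_mul_of_nonneg_left (Real.exp_le_exp.2 h3)
          positivity
  -- take ε → 0⁺
  have hcont : Filter.Tendsto
      (fun ε : ℝ => (C + ε * M) * Real.exp ((∫ s in (0:ℝ)..t, φ s) + ε))
      (nhdsWithin 0 (Ioi 0)) (nhds (C * Real.exp (∫ s in (0:ℝ)..t, φ s))) := by
    have : Filter.Tendsto
        (fun ε : ℝ => (C + ε * M) * Real.exp ((∫ s in (0:ℝ)..t, φ s) + ε))
        (nhds 0) (nhds ((C + 0 * M) * Real.exp ((∫ s in (0:ℝ)..t, φ s) + 0))) := by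
      apply Filter.Tendsto.mul
      · exact (continuous_const.add (continuous_id.mul continuous_const)).tendsto 0
      · exact (Real.continuous_exp.comp (continuous_const.add continuous_id)).tendsto 0
    simpa using this.mono_left nhdsWithin_le_nhds
  refine ge_of_tendsto hcont ?_
  filter_upwards [self_mem_nhdsWithin] with ε hε
  exact key ε hε

set_option maxHeartbeats 1000000 in
lemma energy_ineq {E : Type*} [NormedAddCommGroup E] [InnerProductSpace ℝ E]
    [CompleteSpace E]
    {a b : ℝ} (hab : a ≤ b) (x : ℝ → E) (F : ℝ → E) (h : ℝ → ℝ)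
    (hF : IntegrableOn F (Icc a b)) (hh : IntegrableOn h (Icc a b))
    (hxc : ContinuousOn x (Icc a b))
    (hx : ∀ t ∈ Icc a b, x t = x a + ∫ s in a..t, F s)
    (hbd : ∀ s ∈ Icc a b, 2 * ⟪F s, x s⟫ ≤ h s) :
    ∀ t ∈ Icc a b, ‖x t‖^2 ≤ ‖x a‖^2 + ∫ s in a..t, h s := by
  intro t ht
  -- helper: interval integrability on subintervals
  have hFsub : ∀ p ∈ Icc a b, ∀ q ∈ Icc a b, IntervalIntegrable F volume p q :=
    fun p hp q hq => (hF.mono_set (uIcc_subset_Icc hp hq)).intervalIntegrable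
  have hFnormsub : ∀ p ∈ Icc a b, ∀ q ∈ Icc a b,
      IntervalIntegrable (fun s => ‖F s‖) volume p q := by
    intro p hp q hq
    have h1 : IntegrableOn (fun s => ‖F s‖) (uIcc p q) volume :=
      (hF.mono_set (uIcc_subset_Icc hp hq)).norm
    exact h1.intervalIntegrable
  have hhsub : ∀ p ∈ Icc a b, ∀ q ∈ Icc a b, IntervalIntegrable h volume p q :=
    fun p hp q hq => (hh.mono_set (uIcc_subset_Icc hp hq)).intervalIntegrable
  have hinnersub : ∀ (w : E), ∀ p ∈ Icc a b, ∀ q ∈ Icc a b,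
      IntervalIntegrable (fun s => ⟪F s, w⟫) volume p q := by
    intro w p hp q hq
    have h1 : IntegrableOn (fun s => (innerSL ℝ w) (F s)) (uIcc p q) volume :=
      ContinuousLinearMap.integrable_comp (innerSL ℝ w) (hF.mono_set (uIcc_subset_Icc hp hq))
    have h2 : IntegrableOn (fun s => ⟪F s, w⟫) (uIcc p q) := by
      apply h1.congr_fun_ae
      exact Filter.Eventually.of_forall (fun s => real_inner_comm _ _)
    exact h2.intervalIntegrable
  -- constant K
  obtain ⟨K, hK⟩ : ∃ K, K = ∫ s in Icc a b, ‖F s‖ := ⟨_, rfl⟩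
  have hK0 : 0 ≤ K := hK ▸ setIntegral_nonneg measurableSet_Icc (fun s _ => norm_nonneg _)
  have hKbound : ∀ p ∈ Icc a b, ∀ q ∈ Icc a b, p ≤ q →
      (∫ s in p..q, ‖F s‖) ≤ K := by
    intro p hp q hq hpq
    rw [intervalIntegral.integral_of_le hpq, hK]
    apply setIntegral_mono_set hF.norm
      (Filter.Eventually.of_forall fun s => norm_nonneg _)
    exact Filter.Eventually.of_forall (fun s hs =>
      Ioc_subset_Icc_self.trans (Icc_subset_Icc hp.1 hq.2) hs)
  -- it suffices to prove the bound up to ε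
  refine le_of_forall_pos_le_add ?_
  intro ε hε
  obtain ⟨ε₁, hε₁⟩ : ∃ e : ℝ, e = ε/(4*(K+1)) := ⟨_, rfl⟩
  obtain ⟨ε₂, hε₂⟩ : ∃ e : ℝ, e = ε/(2*(K+1)) := ⟨_, rfl⟩
  have hε₁pos : 0 < ε₁ := by rw [hε₁]; positivity
  have hε₂pos : 0 < ε₂ := by rw [hε₂]; positivity
  -- uniform continuity of x
  obtain ⟨δ₁, hδ₁pos, hδ₁⟩ := (Metric.uniformContinuousOn_iff).1
    (isCompact_Icc.uniformContinuousOn_of_continuous hxc) ε₁ hε₁pos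
  -- uniform continuity of the primitive of ‖F‖
  have hNcont : ContinuousOn (fun r => ∫ s in a..r, ‖F s‖) (Icc a b) := by
    have := intervalIntegral.continuousOn_primitive (f := fun s => ‖F s‖) (μ := volume) hF.norm
    apply this.congr
    intro r hr
    exact intervalIntegral.integral_of_le hr.1
  obtain ⟨δ₂, hδ₂pos, hδ₂⟩ := (Metric.uniformContinuousOn_iff).1
    (isCompact_Icc.uniformContinuousOn_of_continuous hNcont) ε₂ hε₂pos
  obtain ⟨δ, hδ⟩ : ∃ d : ℝ, d = min δ₁ δ₂ := ⟨_, rfl⟩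
  have hδpos : 0 < δ := hδ ▸ lt_min hδ₁pos hδ₂pos
  have hδle1 : δ ≤ δ₁ := hδ ▸ min_le_left _ _
  have hδle2 : δ ≤ δ₂ := hδ ▸ min_le_right _ _
  -- choose n
  obtain ⟨n, hn⟩ := exists_nat_gt (max 1 ((t - a)/δ))
  have hn1 : (1:ℝ) ≤ n := le_of_lt (lt_of_le_of_lt (le_max_left _ _) hn)
  have hnpos : (0:ℝ) < n := lt_of_lt_of_le zero_lt_one hn1
  have hn0 : (n:ℝ) ≠ 0 := ne_of_gt hnpos
  have hstep : (t - a)/n < δ := by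
    rw [div_lt_iff₀ hnpos]
    have h2 : (t - a)/δ < n := lt_of_le_of_lt (le_max_right _ _) hn
    rw [div_lt_iff₀ hδpos] at h2
    linarith
  have hstepnn : 0 ≤ (t - a)/n := by
    apply div_nonneg (by linarith [ht.1]) (le_of_lt hnpos)
  -- the partition
  obtain ⟨τ, hτ⟩ : ∃ f : ℕ → ℝ, f = fun i : ℕ => a + (i:ℝ) * ((t - a)/n) := ⟨_, rfl⟩
  have hτ0 : τ 0 = a := by simp [hτ]
  have hτn : τ n = t := by simp only [hτ]; rw [mul_comm, div_mul_cancel₀ _ hn0]; ring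
  have hτmono : ∀ i j : ℕ, i ≤ j → τ i ≤ τ j := by
    intro i j hij
    simp only [hτ]
    have : (i:ℝ) ≤ j := Nat.cast_le.2 hij
    nlinarith
  have hτmem : ∀ i : ℕ, i ≤ n → τ i ∈ Icc a b := by
    intro i hi
    constructor
    · simp only [hτ]; nlinarith [Nat.cast_nonneg (α := ℝ) i]
    · have := hτmono i n hi
      rw [hτn] at this
      exact this.trans ht.2
  have hτstep : ∀ i : ℕ, τ (i+1) - τ i = (t - a)/n := by
    intro i; simp only [hτ]; push_cast; ring
  have habmem : a ∈ Icc a b := ⟨le_rfl, hab⟩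
  -- increments of x
  have hΔ : ∀ i : ℕ, i < n → x (τ (i+1)) - x (τ i) = ∫ s in τ i..τ (i+1), F s := by
    intro i hi
    have h1 := hx (τ (i+1)) (hτmem (i+1) hi)
    have h2 := hx (τ i) (hτmem i hi.le)
    rw [h1, h2, add_sub_add_left_eq_sub]
    exact intervalIntegral.integral_interval_sub_left
      (hFsub a habmem (τ (i+1)) (hτmem (i+1) hi))
      (hFsub a habmem (τ i) (hτmem i hi.le))
  -- the key per-interval estimate
  have hkey : ∀ i : ℕ, i < n →
      ‖x (τ (i+1))‖^2 - ‖x (τ i)‖^2 ≤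
        (∫ s in τ i..τ (i+1), (h s + 2*ε₁*‖F s‖)) +
          ε₂ * ∫ s in τ i..τ (i+1), ‖F s‖ := by
    intro i hi
    have hi1 : i + 1 ≤ n := hi
    have hmi := hτmem i hi.le
    have hmi1 := hτmem (i+1) hi1
    have hstepi : τ i ≤ τ (i+1) := hτmono i (i+1) (Nat.le_succ i)
    set Δ : E := x (τ (i+1)) - x (τ i) with hΔdef
    have hΔeq : Δ = ∫ s in τ i..τ (i+1), F s := hΔ i hi
    have hid : ‖x (τ (i+1))‖^2 - ‖x (τ i)‖^2 = 2 * ⟪Δ, x (τ i)⟫ + ‖Δ‖^2 := by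
      have hxi : x (τ (i+1)) = x (τ i) + Δ := by rw [hΔdef]; abel
      rw [hxi, norm_add_sq_real, real_inner_comm]
      ring
    have hinner : ⟪Δ, x (τ i)⟫ = ∫ s in τ i..τ (i+1), ⟪F s, x (τ i)⟫ := by
      have e1 : (∫ s in τ i..τ (i+1), ⟪F s, x (τ i)⟫)
          = (innerSL ℝ (x (τ i))) (∫ s in τ i..τ (i+1), F s) := by
        rw [← ContinuousLinearMap.intervalIntegral_comp_comm
          (innerSL ℝ (x (τ i))) (hFsub (τ i) hmi (τ (i+1)) hmi1)]
        apply intervalIntegral.integral_congr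
        intro s _
        simp only [innerSL_apply_apply]
        exact real_inner_comm _ _
      rw [e1, hΔeq]
      simp only [innerSL_apply_apply]
      exact real_inner_comm _ _
    have hptwise : ∀ s ∈ Icc (τ i) (τ (i+1)),
        2 * ⟪F s, x (τ i)⟫ ≤ h s + 2*ε₁*‖F s‖ := by
      intro s hs
      have hsmem : s ∈ Icc a b := ⟨hmi.1.trans hs.1, hs.2.trans hmi1.2⟩
      have hdist : dist (τ i) s < δ₁ := by
        rw [Real.dist_eq, abs_of_nonpos (sub_nonpos.mpr hs.1)]
        have h4 : s - τ i ≤ τ (i+1) - τ i := sub_le_sub_right hs.2 (τ i)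
        have h5 : τ (i+1) - τ i < δ₁ := by
          rw [hτstep i]; exact lt_of_lt_of_le hstep hδle1
        have h6 : -(τ i - s) = s - τ i := by ring
        rw [h6]; exact lt_of_le_of_lt h4 h5
      have hxd : ‖x (τ i) - x s‖ < ε₁ := by
        rw [← dist_eq_norm]
        exact hδ₁ (τ i) hmi s hsmem hdist
      have hsplit : ⟪F s, x (τ i)⟫ = ⟪F s, x s⟫ + ⟪F s, x (τ i) - x s⟫ := by
        rw [← inner_add_right]
        congr 1
        abel
      have hcs : ⟪F s, x (τ i) - x s⟫ ≤ ‖F s‖ * ‖x (τ i) - x s‖ :=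
        real_inner_le_norm _ _
      have hb1 := hbd s hsmem
      nlinarith [norm_nonneg (F s), hxd.le, norm_nonneg (x (τ i) - x s)]
    have hIbound : (∫ s in τ i..τ (i+1), 2 * ⟪F s, x (τ i)⟫)
        ≤ ∫ s in τ i..τ (i+1), (h s + 2*ε₁*‖F s‖) := by
      apply intervalIntegral.integral_mono_on hstepi
        ((hinnersub (x (τ i)) (τ i) hmi (τ (i+1)) hmi1).const_mul 2)
        ((hhsub (τ i) hmi (τ (i+1)) hmi1).add
          ((hFnormsub (τ i) hmi (τ (i+1)) hmi1).const_mul (2*ε₁)))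
      exact hptwise
    have h2i : 2 * ⟪Δ, x (τ i)⟫ = ∫ s in τ i..τ (i+1), 2 * ⟪F s, x (τ i)⟫ := by
      rw [hinner, intervalIntegral.integral_const_mul]
    have hm : ‖Δ‖ ≤ ∫ s in τ i..τ (i+1), ‖F s‖ := by
      rw [hΔeq]
      exact intervalIntegral.norm_integral_le_integral_norm hstepi
    have hmε : (∫ s in τ i..τ (i+1), ‖F s‖) ≤ ε₂ := by
      have hiid : (∫ s in a..τ (i+1), ‖F s‖) - (∫ s in a..τ i, ‖F s‖)
          = ∫ s in τ i..τ (i+1), ‖F s‖ :=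
        intervalIntegral.integral_interval_sub_left
          (hFnormsub a habmem (τ (i+1)) hmi1) (hFnormsub a habmem (τ i) hmi)
      have hdist : dist (τ i) (τ (i+1)) < δ₂ := by
        rw [Real.dist_eq, abs_of_nonpos (sub_nonpos.mpr hstepi)]
        have h5 : τ (i+1) - τ i < δ₂ := by
          rw [hτstep i]; exact lt_of_lt_of_le hstep hδle2
        have h6 : -(τ i - τ (i+1)) = τ (i+1) - τ i := by ring
        rw [h6]; exact h5
      have := hδ₂ (τ i) hmi (τ (i+1)) hmi1 hdist
      rw [Real.dist_eq] at this
      have habs := neg_abs_le ((∫ s in a..τ i, ‖F s‖) - ∫ s in a..τ (i+1), ‖F s‖)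
      linarith [abs_nonneg ((∫ s in a..τ i, ‖F s‖) - ∫ s in a..τ (i+1), ‖F s‖)]
    have hΔnn : (0:ℝ) ≤ ‖Δ‖ := norm_nonneg _
    nlinarith [hm, hmε, hΔnn, hIbound]
  -- summation
  have hsum1 : ∑ i ∈ Finset.range n, (‖x (τ (i+1))‖^2 - ‖x (τ i)‖^2)
      = ‖x t‖^2 - ‖x a‖^2 := by
    rw [Finset.sum_range_sub (fun i => ‖x (τ i)‖^2), hτ0, hτn]
  have hsum2 : ∑ i ∈ Finset.range n, (∫ s in τ i..τ (i+1), (h s + 2*ε₁*‖F s‖))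
      = ∫ s in a..t, (h s + 2*ε₁*‖F s‖) := by
    rw [← hτ0, ← hτn]
    apply intervalIntegral.sum_integral_adjacent_intervals
    intro k hk
    exact (hhsub (τ k) (hτmem k hk.le) (τ (k+1)) (hτmem (k+1) hk)).add
      ((hFnormsub (τ k) (hτmem k hk.le) (τ (k+1)) (hτmem (k+1) hk)).const_mul (2*ε₁))
  have hsum3 : ∑ i ∈ Finset.range n, (∫ s in τ i..τ (i+1), ‖F s‖)
      = ∫ s in a..t, ‖F s‖ := by
    rw [← hτ0, ← hτn]
    apply intervalIntegral.sum_integral_adjacent_intervals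
    intro k hk
    exact hFnormsub (τ k) (hτmem k hk.le) (τ (k+1)) (hτmem (k+1) hk)
  have htotal : ‖x t‖^2 - ‖x a‖^2 ≤
      (∫ s in a..t, (h s + 2*ε₁*‖F s‖)) + ε₂ * ∫ s in a..t, ‖F s‖ := by
    rw [← hsum1, ← hsum2, ← hsum3, Finset.mul_sum, ← Finset.sum_add_distrib]
    exact Finset.sum_le_sum (fun i hi => hkey i (Finset.mem_range.1 hi))
  -- conclude
  have hsplit2 : (∫ s in a..t, (h s + 2*ε₁*‖F s‖))
      = (∫ s in a..t, h s) + 2*ε₁ * ∫ s in a..t, ‖F s‖ := by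
    rw [intervalIntegral.integral_add (hhsub a habmem t ht)
      ((hFnormsub a habmem t ht).const_mul (2*ε₁)),
      intervalIntegral.integral_const_mul]
  have hKt : (∫ s in a..t, ‖F s‖) ≤ K := hKbound a habmem t ht ht.1
  have hKtnn : (0:ℝ) ≤ ∫ s in a..t, ‖F s‖ :=
    intervalIntegral.integral_nonneg ht.1 (fun s _ => norm_nonneg _)
  have hfin1 : 2*ε₁ * (∫ s in a..t, ‖F s‖) ≤ ε/2 := by
    have h1 : 2*ε₁ * (∫ s in a..t, ‖F s‖) ≤ 2*ε₁ * K :=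
      mul_le_mul_of_nonneg_left hKt (by positivity)
    have hd : ε₁ * (4*(K+1)) = ε := by
      rw [hε₁]; field_simp
    nlinarith [hε₁pos.le, hK0]
  have hfin2 : ε₂ * (∫ s in a..t, ‖F s‖) ≤ ε/2 := by
    have h1 : ε₂ * (∫ s in a..t, ‖F s‖) ≤ ε₂ * K :=
      mul_le_mul_of_nonneg_left hKt hε₂pos.le
    have hd : ε₂ * (2*(K+1)) = ε := by
      rw [hε₂]; field_simp
    nlinarith [hε₂pos.le, hK0]
  linarith [htotal, hsplit2, hfin1, hfin2]

set_option maxHeartbeats 2000000 in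
/-- A priori bound for solutions of the controlled equation:
if `2⟨a(s,y), y⟩ ≤ κ(1 + ‖y‖²)`, `f(s) = ∫_X ‖g(s,v)‖₀·|ψ(s,v) − 1| ν(dv)` has finite
integral `I = ∫₀ᵀ f(s) ds`, and `x` is a continuous solution of
`x(t) = x₀ + ∫₀ᵗ a(s,x(s)) ds + ∫₀ᵗ ∫_X g(s,x(s),v)(ψ(s,v) − 1) ν(dv) ds`, then
`sup_{t ∈ [0,T]} ‖x(t)‖² ≤ (‖x₀‖² + κT + 2I)·exp(κT + 4I)`. -/
theorem apriori_bound_controlled_equation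
    (T : ℝ) (hT : 0 < T) (d : ℕ)
    {X : Type*} [MeasurableSpace X] (ν : Measure X) [SigmaFinite ν]
    (a : ℝ × EuclideanSpace ℝ (Fin d) → EuclideanSpace ℝ (Fin d))
    (g : ℝ × EuclideanSpace ℝ (Fin d) × X → EuclideanSpace ℝ (Fin d))
    (hameas : Measurable a) (hgmeas : Measurable g)
    (κ : ℝ) (hκ : 0 < κ)
    (hcoer : ∀ s ∈ Icc (0:ℝ) T, ∀ y : EuclideanSpace ℝ (Fin d),
      2 * ⟪a (s, y), y⟫ ≤ κ * (1 + ‖y‖ ^ 2))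
    (ψ : ℝ × X → ℝ) (hψmeas : Measurable ψ) (hψnonneg : ∀ p, 0 ≤ ψ p)
    (hf : ∫⁻ s in Icc (0:ℝ) T,
        ∫⁻ v, gNorm0 d g s v * ENNReal.ofReal |ψ (s, v) - 1| ∂ν < ⊤)
    (x₀ : EuclideanSpace ℝ (Fin d)) (x : ℝ → EuclideanSpace ℝ (Fin d))
    (hxcont : ContinuousOn x (Icc 0 T))
    (hxeq : ∀ t ∈ Icc (0:ℝ) T,
      x t = x₀ + (∫ s in (0:ℝ)..t, a (s, x s))
          + ∫ s in (0:ℝ)..t, ∫ v, (ψ (s, v) - 1) • g (s, x s, v) ∂ν) :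
    ∀ t ∈ Icc (0:ℝ) T,
      ‖x t‖ ^ 2 ≤
        (‖x₀‖ ^ 2 + κ * T +
            2 * (∫⁻ s in Icc (0:ℝ) T,
                ∫⁻ v, gNorm0 d g s v * ENNReal.ofReal |ψ (s, v) - 1| ∂ν).toReal) *
          Real.exp (κ * T +
            4 * (∫⁻ s in Icc (0:ℝ) T,
                ∫⁻ v, gNorm0 d g s v * ENNReal.ofReal |ψ (s, v) - 1| ∂ν).toReal) := by
  have hTnn : (0:ℝ) ≤ T := hT.le
  -- projection onto [0,T]
  obtain ⟨π, hπ⟩ : ∃ f : ℝ → ℝ, f = fun t => max 0 (min t T) := ⟨_, rfl⟩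
  have hπcont : Continuous π := by
    rw [hπ]; exact continuous_const.max (continuous_id.min continuous_const)
  have hπmem : ∀ t, π t ∈ Icc (0:ℝ) T := by
    intro t
    rw [hπ]
    exact ⟨le_max_left _ _, max_le hTnn (min_le_right _ _)⟩
  have hπid : ∀ t ∈ Icc (0:ℝ) T, π t = t := by
    intro t ht
    rw [hπ]
    simp only [min_eq_left ht.2, max_eq_right ht.1]
  -- extended solution
  obtain ⟨x', hx'⟩ : ∃ f : ℝ → EuclideanSpace ℝ (Fin d), f = fun t => x (π t) := ⟨_, rfl⟩
  have hx'cont : Continuous x' := by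
    rw [hx']; exact hxcont.comp_continuous hπcont hπmem
  have hx'eq : ∀ t ∈ Icc (0:ℝ) T, x' t = x t := by
    intro t ht; rw [hx']; simp only [hπid t ht]
  -- u
  obtain ⟨u, hu⟩ : ∃ f : ℝ → ℝ, f = fun t => ‖x' t‖^2 := ⟨_, rfl⟩
  have hucont : Continuous u := by rw [hu]; exact (hx'cont.norm).pow 2
  have hunn : ∀ s, 0 ≤ u s := by intro s; rw [hu]; positivity
  have huval : ∀ s, u s = ‖x' s‖^2 := fun s => by rw [hu]
  -- bound on ‖x'‖
  obtain ⟨M, hMx⟩ := isCompact_Icc.exists_bound_of_continuousOn hxcont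
  have hM : ∀ s, ‖x' s‖ ≤ M := by
    intro s; rw [hx']; exact hMx (π s) (hπmem s)
  have hM0 : 0 ≤ M := le_trans (norm_nonneg _) (hM 0)
  -- L and I
  obtain ⟨L, hL⟩ : ∃ f : ℝ → ℝ≥0∞,
      f = fun s => ∫⁻ v, gNorm0 d g s v * ENNReal.ofReal |ψ (s, v) - 1| ∂ν := ⟨_, rfl⟩
  have hfL : ∫⁻ s in Icc (0:ℝ) T, L s < ⊤ := by rw [hL]; exact hf
  have hItop : (∫⁻ s in Icc (0:ℝ) T, L s) ≠ ⊤ := hfL.ne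
  obtain ⟨I, hI⟩ : ∃ r : ℝ, r = (∫⁻ s in Icc (0:ℝ) T, L s).toReal := ⟨_, rfl⟩
  have hI0 : 0 ≤ I := hI ▸ ENNReal.toReal_nonneg
  -- c
  obtain ⟨c, hcdef⟩ : ∃ f : ℝ → EuclideanSpace ℝ (Fin d),
      f = fun s => ∫ v, (ψ (s, v) - 1) • g (s, x' s, v) ∂ν := ⟨_, rfl⟩
  have hcsm : StronglyMeasurable c := by
    rw [hcdef]
    apply MeasureTheory.StronglyMeasurable.integral_prod_right'
      (f := fun p : ℝ × X => (ψ (p.1, p.2) - 1) • g (p.1, x' p.1, p.2))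
    apply Measurable.stronglyMeasurable
    have h1 : Measurable (fun p : ℝ × X => ψ (p.1, p.2) - 1) :=
      (hψmeas.comp ((measurable_fst).prodMk measurable_snd)).sub measurable_const
    have h2 : Measurable (fun p : ℝ × X => g (p.1, x' p.1, p.2)) :=
      hgmeas.comp ((measurable_fst).prodMk
        (((hx'cont.measurable).comp measurable_fst).prodMk measurable_snd))
    exact h1.smul h2
  -- pointwise bound on the integrand
  have hgbound : ∀ (s : ℝ) (y : EuclideanSpace ℝ (Fin d)) (v : X),
      ENNReal.ofReal ‖(ψ (s,v) - 1) • g (s,y,v)‖ ≤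
        (gNorm0 d g s v * ENNReal.ofReal |ψ (s,v) - 1|) * ENNReal.ofReal (1 + ‖y‖) := by
    intro s y v
    have h3 : (0:ℝ) < 1 + ‖y‖ := by positivity
    have h1 : ‖(ψ (s,v) - 1) • g (s,y,v)‖ = |ψ (s,v) - 1| * ‖g (s,y,v)‖ := by
      rw [norm_smul, Real.norm_eq_abs]
    have h2 : ENNReal.ofReal ‖g (s,y,v)‖ ≤ gNorm0 d g s v * ENNReal.ofReal (1 + ‖y‖) := by
      have h4 : ENNReal.ofReal (‖g (s,y,v)‖ / (1 + ‖y‖)) ≤ gNorm0 d g s v := by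
        exact le_iSup (fun y' : EuclideanSpace ℝ (Fin d) =>
          ENNReal.ofReal (‖g (s, y', v)‖ / (1 + ‖y'‖))) y
      calc ENNReal.ofReal ‖g (s,y,v)‖
          = ENNReal.ofReal (‖g (s,y,v)‖ / (1+‖y‖) * (1+‖y‖)) := by
            rw [div_mul_cancel₀ _ (ne_of_gt h3)]
        _ = ENNReal.ofReal (‖g (s,y,v)‖ / (1+‖y‖)) * ENNReal.ofReal (1+‖y‖) :=
            ENNReal.ofReal_mul (div_nonneg (norm_nonneg _) h3.le)
        _ ≤ gNorm0 d g s v * ENNReal.ofReal (1+‖y‖) := mul_le_mul_left h4 _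
    calc ENNReal.ofReal ‖(ψ (s,v) - 1) • g (s,y,v)‖
        = ENNReal.ofReal |ψ (s,v) - 1| * ENNReal.ofReal ‖g (s,y,v)‖ := by
          rw [h1, ENNReal.ofReal_mul (abs_nonneg _)]
      _ ≤ ENNReal.ofReal |ψ (s,v) - 1| * (gNorm0 d g s v * ENNReal.ofReal (1+‖y‖)) :=
          mul_le_mul_right h2 _
      _ = (gNorm0 d g s v * ENNReal.ofReal |ψ (s,v) - 1|) * ENNReal.ofReal (1+‖y‖) := by
          ring
  have hcnorm : ∀ s, ENNReal.ofReal ‖c s‖ ≤ L s * ENNReal.ofReal (1 + ‖x' s‖) := by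
    intro s
    have hlint : (∫⁻ v, ENNReal.ofReal ‖(ψ (s,v) - 1) • g (s, x' s, v)‖ ∂ν)
        ≤ L s * ENNReal.ofReal (1 + ‖x' s‖) := by
      calc (∫⁻ v, ENNReal.ofReal ‖(ψ (s,v) - 1) • g (s, x' s, v)‖ ∂ν)
          ≤ ∫⁻ v, (gNorm0 d g s v * ENNReal.ofReal |ψ (s,v) - 1|) *
              ENNReal.ofReal (1 + ‖x' s‖) ∂ν :=
            lintegral_mono (fun v => hgbound s (x' s) v)
        _ = L s * ENNReal.ofReal (1 + ‖x' s‖) := by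
            rw [hL]
            exact lintegral_mul_const' _ _ ENNReal.ofReal_ne_top
    refine le_trans ?_ hlint
    rcases eq_or_ne (∫⁻ v, ENNReal.ofReal ‖(ψ (s,v) - 1) • g (s, x' s, v)‖ ∂ν) ⊤ with he | he
    · rw [he]; exact le_top
    · have hn := MeasureTheory.norm_integral_le_lintegral_norm
        (μ := ν) (fun v => (ψ (s,v) - 1) • g (s, x' s, v))
      rw [hcdef]
      calc ENNReal.ofReal ‖∫ v, (ψ (s,v) - 1) • g (s, x' s, v) ∂ν‖
          ≤ ENNReal.ofReal ((∫⁻ v, ENNReal.ofReal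
              ‖(ψ (s,v) - 1) • g (s, x' s, v)‖ ∂ν).toReal) := ENNReal.ofReal_le_ofReal hn
        _ = _ := ENNReal.ofReal_toReal he
  -- the control function φ
  obtain ⟨φ, hφdef⟩ : ∃ f : ℝ → ℝ, f = fun s => ‖c s‖ / (1 + ‖x' s‖) := ⟨_, rfl⟩
  have hxpos : ∀ s, (0:ℝ) < 1 + ‖x' s‖ := fun s => by positivity
  have hφnn : ∀ s, 0 ≤ φ s := by
    intro s; rw [hφdef]
    exact div_nonneg (norm_nonneg _) (hxpos s).le
  have hφc : ∀ s, ‖c s‖ = φ s * (1 + ‖x' s‖) := by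
    intro s; rw [hφdef]
    exact (div_mul_cancel₀ _ (ne_of_gt (hxpos s))).symm
  have hφmeas : Measurable φ := by
    rw [hφdef]
    exact (hcsm.measurable.norm).div
      ((continuous_const.add hx'cont.norm).measurable)
  have hφofReal : ∀ s, ENNReal.ofReal (φ s) ≤ L s := by
    intro s
    rw [hφdef]
    simp only []
    rw [ENNReal.ofReal_div_of_pos (hxpos s)]
    exact ENNReal.div_le_of_le_mul (hcnorm s)
  have hφlint : ∫⁻ s in Icc (0:ℝ) T, ENNReal.ofReal (φ s) ≤ ∫⁻ s in Icc (0:ℝ) T, L s :=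
    lintegral_mono (fun s => hφofReal s)
  have hφInt : IntegrableOn φ (Icc (0:ℝ) T) := by
    constructor
    · exact hφmeas.aestronglyMeasurable
    · rw [hasFiniteIntegral_iff_ofReal
        (Filter.Eventually.of_forall (fun s => hφnn s))]
      exact lt_of_le_of_lt hφlint hfL
  have hφI : ∫ s in Icc (0:ℝ) T, φ s ≤ I := by
    rw [hI, MeasureTheory.integral_eq_lintegral_of_nonneg_ae
      (Filter.Eventually.of_forall (fun s => hφnn s)) hφmeas.aestronglyMeasurable]
    exact ENNReal.toReal_mono hItop hφlint
  have hφIt : ∀ t ∈ Icc (0:ℝ) T, (∫ s in (0:ℝ)..t, φ s) ≤ I := by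
    intro t ht
    rw [intervalIntegral.integral_of_le ht.1]
    refine le_trans ?_ hφI
    rw [← integral_Icc_eq_integral_Ioc]
    apply setIntegral_mono_set hφInt
      (Filter.Eventually.of_forall (fun s => hφnn s))
    exact Filter.Eventually.of_forall (fun s hs => Icc_subset_Icc le_rfl ht.2 hs)
  -- c is integrable on [0,T]
  have hcInt : IntegrableOn c (Icc (0:ℝ) T) := by
    constructor
    · exact hcsm.aestronglyMeasurable
    · rw [hasFiniteIntegral_iff_norm]
      calc ∫⁻ s in Icc (0:ℝ) T, ENNReal.ofReal ‖c s‖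
          ≤ ∫⁻ s in Icc (0:ℝ) T, L s * ENNReal.ofReal (1 + M) := by
            apply lintegral_mono
            intro s
            refine le_trans (hcnorm s) (mul_le_mul_right ?_ _)
            exact ENNReal.ofReal_le_ofReal (by linarith [hM s])
        _ = (∫⁻ s in Icc (0:ℝ) T, L s) * ENNReal.ofReal (1 + M) :=
            lintegral_mul_const' _ _ ENNReal.ofReal_ne_top
        _ < ⊤ := ENNReal.mul_lt_top hfL ENNReal.ofReal_lt_top
  -- rewrite the equation
  obtain ⟨aa, haadef⟩ : ∃ f : ℝ → EuclideanSpace ℝ (Fin d),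
      f = fun s => a (s, x' s) := ⟨_, rfl⟩
  have haaeq : ∀ s ∈ Icc (0:ℝ) T, aa s = a (s, x s) := by
    intro s hs; rw [haadef]; simp only [hx'eq s hs]
  have hceq : ∀ s ∈ Icc (0:ℝ) T, c s = ∫ v, (ψ (s, v) - 1) • g (s, x s, v) ∂ν := by
    intro s hs; rw [hcdef]; simp only [hx'eq s hs]
  have hxeq' : ∀ t ∈ Icc (0:ℝ) T,
      x t = x₀ + (∫ s in (0:ℝ)..t, aa s) + ∫ s in (0:ℝ)..t, c s := by
    intro t ht
    rw [hxeq t ht]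
    have e1 : (∫ s in (0:ℝ)..t, a (s, x s)) = ∫ s in (0:ℝ)..t, aa s := by
      apply intervalIntegral.integral_congr
      intro s hs
      rw [uIcc_of_le ht.1] at hs
      exact (haaeq s ⟨hs.1, hs.2.trans ht.2⟩).symm
    have e2 : (∫ s in (0:ℝ)..t, ∫ v, (ψ (s, v) - 1) • g (s, x s, v) ∂ν)
        = ∫ s in (0:ℝ)..t, c s := by
      apply intervalIntegral.integral_congr
      intro s hs
      rw [uIcc_of_le ht.1] at hs
      exact (hceq s ⟨hs.1, hs.2.trans ht.2⟩).symm
    rw [e1, e2]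
  have hx0 : x 0 = x₀ := by
    have := hxeq' 0 (left_mem_Icc.2 hTnn)
    simpa using this
  -- the Grönwall data
  obtain ⟨ρ, hρdef⟩ : ∃ f : ℝ → ℝ,
      f = fun s => 2*φ s + (κ + 4*φ s) * u s := ⟨_, rfl⟩
  have hρval : ∀ s, ρ s = 2*φ s + (κ + 4*φ s) * u s := fun s => by rw [hρdef]
  have huM : ∀ s, u s ≤ M^2 := by
    intro s
    rw [huval s]
    have := hM s
    nlinarith [norm_nonneg (x' s)]
  have hρInt : IntegrableOn ρ (Icc (0:ℝ) T) := by
    have h1 : IntegrableOn (fun s => 2 * φ s) (Icc (0:ℝ) T) := hφInt.const_mul 2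
    have h2 : IntegrableOn (fun s => κ * u s) (Icc (0:ℝ) T) :=
      (continuous_const.mul hucont).integrableOn_Icc
    have h3 : IntegrableOn (fun s => u s * (4 * φ s)) (Icc (0:ℝ) T) := by
      apply Integrable.bdd_mul (c := M^2) (hφInt.const_mul 4)
        hucont.aestronglyMeasurable.restrict
      refine Filter.Eventually.of_forall (fun s => ?_)
      rw [Real.norm_eq_abs, abs_of_nonneg (hunn s)]
      exact huM s
    have h4 : IntegrableOn
        (fun s => 2 * φ s + (κ * u s + u s * (4 * φ s))) (Icc (0:ℝ) T) :=
      h1.add (h2.add h3)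
    exact h4.congr_fun (fun s _ => by rw [hρval s]; ring) measurableSet_Icc
  have hρnn : ∀ s, 0 ≤ ρ s := by
    intro s
    rw [hρval s]
    have := hφnn s
    have := hunn s
    positivity
  obtain ⟨B, hBdef⟩ : ∃ f : ℝ → ℝ,
      f = fun r => ‖x₀‖^2 + κ*T + ∫ s in (0:ℝ)..r, ρ s := ⟨_, rfl⟩
  have hBval : ∀ r, B r = ‖x₀‖^2 + κ*T + ∫ s in (0:ℝ)..r, ρ s := fun r => by rw [hBdef]
  -- interval integrability helpers
  have hρii : ∀ p ∈ Icc (0:ℝ) T, ∀ q ∈ Icc (0:ℝ) T, IntervalIntegrable ρ volume p q :=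
    fun p hp q hq => (hρInt.mono_set (uIcc_subset_Icc hp hq)).intervalIntegrable
  have hφii : ∀ p ∈ Icc (0:ℝ) T, ∀ q ∈ Icc (0:ℝ) T, IntervalIntegrable φ volume p q :=
    fun p hp q hq => (hφInt.mono_set (uIcc_subset_Icc hp hq)).intervalIntegrable
  have hcii : ∀ p ∈ Icc (0:ℝ) T, ∀ q ∈ Icc (0:ℝ) T, IntervalIntegrable c volume p q :=
    fun p hp q hq => (hcInt.mono_set (uIcc_subset_Icc hp hq)).intervalIntegrable
  have h0T : (0:ℝ) ∈ Icc (0:ℝ) T := left_mem_Icc.2 hTnn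
  -- good-case bound
  have hgood : ∀ t ∈ Icc (0:ℝ) T, IntegrableOn aa (Ioc 0 t) → u t ≤ B t := by
    intro t ht hgd
    have htIcc : Icc (0:ℝ) t ⊆ Icc (0:ℝ) T := Icc_subset_Icc le_rfl ht.2
    have haaInt : IntegrableOn aa (Icc (0:ℝ) t) := by
      rw [integrableOn_Icc_iff_integrableOn_Ioc]
      exact hgd
    have hcInt' : IntegrableOn c (Icc (0:ℝ) t) := hcInt.mono_set htIcc
    have hFInt : IntegrableOn (fun s => aa s + c s) (Icc (0:ℝ) t) := haaInt.add hcInt'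
    have hhInt : IntegrableOn (fun s => κ + ρ s) (Icc (0:ℝ) t) :=
      (continuous_const.integrableOn_Icc).add (hρInt.mono_set htIcc)
    have hxid : ∀ r ∈ Icc (0:ℝ) t, x r = x 0 + ∫ s in (0:ℝ)..r, (aa s + c s) := by
      intro r hr
      have hrT : r ∈ Icc (0:ℝ) T := ⟨hr.1, hr.2.trans ht.2⟩
      rw [hxeq' r hrT, hx0]
      rw [intervalIntegral.integral_add
        (by rw [intervalIntegrable_iff_integrableOn_Ioc_of_le hr.1]
            exact hgd.mono_set (Ioc_subset_Ioc le_rfl hr.2))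
        (by rw [intervalIntegrable_iff_integrableOn_Ioc_of_le hr.1]
            exact hcInt.mono_set ((Ioc_subset_Icc_self).trans
              (Icc_subset_Icc le_rfl hrT.2)))]
      rw [add_assoc]
    have hbd : ∀ s ∈ Icc (0:ℝ) t, 2*⟪aa s + c s, x s⟫ ≤ κ + ρ s := by
      intro s hs
      have hsT : s ∈ Icc (0:ℝ) T := ⟨hs.1, hs.2.trans ht.2⟩
      have hxx : x' s = x s := hx'eq s hsT
      have h1 : 2*⟪aa s, x s⟫ ≤ κ * (1 + ‖x s‖^2) := by
        rw [haaeq s hsT]; exact hcoer s hsT (x s)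
      have h2 : ⟪c s, x s⟫ ≤ ‖c s‖ * ‖x s‖ := real_inner_le_norm _ _
      have h3 : ‖c s‖ = φ s * (1 + ‖x s‖) := by rw [hφc s, hxx]
      have h4 : u s = ‖x s‖^2 := by rw [huval s, hxx]
      have h5 := hρval s
      rw [inner_add_left]
      have hy := norm_nonneg (x s)
      nlinarith [hφnn s, mul_nonneg (hφnn s) (sq_nonneg (1 - ‖x s‖))]
    have hen := energy_ineq ht.1 x (fun s => aa s + c s) (fun s => κ + ρ s)
      hFInt hhInt (hxcont.mono htIcc) hxid hbd t (right_mem_Icc.2 ht.1)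
    have hsplit : (∫ s in (0:ℝ)..t, (κ + ρ s)) = κ * t + ∫ s in (0:ℝ)..t, ρ s := by
      rw [intervalIntegral.integral_add intervalIntegrable_const (hρii 0 h0T t ht)]
      rw [intervalIntegral.integral_const]
      simp [smul_eq_mul, mul_comm]
    have hut : u t = ‖x t‖^2 := by rw [huval t, hx'eq t ht]
    have hκt : κ * t ≤ κ * T := mul_le_mul_of_nonneg_left ht.2 hκ.le
    rw [hut, hBval t]
    rw [hx0, hsplit] at hen
    linarith
  -- continuity of primitives
  have hGcont : ContinuousOn (fun r => ∫ s in (0:ℝ)..r, c s) (Icc (0:ℝ) T) := by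
    have h1 := intervalIntegral.continuousOn_primitive (f := c) (μ := volume) hcInt
    apply h1.congr
    intro r hr
    exact intervalIntegral.integral_of_le hr.1
  have hBcont : ContinuousOn B (Icc (0:ℝ) T) := by
    have h1 := intervalIntegral.continuousOn_primitive (f := ρ) (μ := volume) hρInt
    have h2 : ContinuousOn (fun r => ∫ s in (0:ℝ)..r, ρ s) (Icc (0:ℝ) T) := by
      apply h1.congr
      intro r hr
      exact intervalIntegral.integral_of_le hr.1
    rw [hBdef]
    exact continuousOn_const.add h2
  -- the unified claim
  have hclaim : ∀ t ∈ Icc (0:ℝ) T, u t ≤ B t := by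
    intro t ht
    by_cases hgd : IntegrableOn aa (Ioc 0 t)
    · exact hgood t ht hgd
    have htS : t ∈ {r : ℝ | r ∈ Icc (0:ℝ) T ∧ ¬ IntegrableOn aa (Ioc 0 r)} := ⟨ht, hgd⟩
    set S := {r : ℝ | r ∈ Icc (0:ℝ) T ∧ ¬ IntegrableOn aa (Ioc 0 r)} with hS
    have hSne : S.Nonempty := ⟨t, htS⟩
    have hSbdd : BddBelow S := ⟨0, fun r hr => hr.1.1⟩
    obtain ⟨t₀, ht₀⟩ : ∃ r : ℝ, r = sInf S := ⟨_, rfl⟩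
    have ht₀le : t₀ ≤ t := ht₀ ▸ csInf_le hSbdd htS
    have ht₀0 : 0 ≤ t₀ := ht₀ ▸ le_csInf hSne (fun r hr => hr.1.1)
    have ht₀T : t₀ ∈ Icc (0:ℝ) T := ⟨ht₀0, ht₀le.trans ht.2⟩
    have hbad : ∀ r, t₀ < r → r ≤ t → ¬ IntegrableOn aa (Ioc 0 r) := by
      intro r hr hrt hint
      obtain ⟨s', hs'S, hs'lt⟩ := exists_lt_of_csInf_lt hSne (ht₀ ▸ hr)
      exact hs'S.2 (hint.mono_set (Ioc_subset_Ioc le_rfl hs'lt.le))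
    have hgoodlt : ∀ r, 0 ≤ r → r < t₀ → IntegrableOn aa (Ioc 0 r) := by
      intro r hr0 hrt₀
      by_contra hcon
      have hrS : r ∈ S := ⟨⟨hr0, ((hrt₀.trans_le ht₀le).le).trans ht.2⟩, hcon⟩
      have := csInf_le hSbdd hrS
      rw [← ht₀] at this
      linarith
    have hAzero : ∀ r, t₀ < r → r ≤ t → (∫ s in (0:ℝ)..r, aa s) = 0 := by
      intro r hr hrt
      apply intervalIntegral.integral_undef
      intro hii
      exact hbad r hr hrt
        ((intervalIntegrable_iff_integrableOn_Ioc_of_le (ht₀0.trans hr.le)).1 hii)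
    have hA₀ : (∫ s in (0:ℝ)..t₀, aa s) = 0 := by
      by_cases hgd₀ : IntegrableOn aa (Ioc 0 t₀)
      · -- continuity argument
        have ht₀lt : t₀ < t := by
          rcases eq_or_lt_of_le ht₀le with h | h
          · exact absurd (h ▸ hgd₀) hgd
          · exact h
        have hev : ∀ᶠ r in nhdsWithin t₀ (Ioi t₀),
            x r = x₀ + ∫ s in (0:ℝ)..r, c s := by
          filter_upwards [Ioc_mem_nhdsGT_of_mem (⟨le_rfl, ht₀lt⟩ : t₀ ∈ Ico t₀ t)]
          intro r hr
          have hrT : r ∈ Icc (0:ℝ) T := ⟨ht₀0.trans hr.1.le, hr.2.trans ht.2⟩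
          rw [hxeq' r hrT, hAzero r hr.1 hr.2, add_zero]
        have hxtd : Filter.Tendsto x (nhdsWithin t₀ (Ioi t₀)) (nhds (x t₀)) := by
          have h1 : ContinuousWithinAt x (Icc (0:ℝ) T) t₀ := hxcont t₀ ht₀T
          have h2 : ContinuousWithinAt x (Ioc t₀ T) t₀ :=
            h1.mono (fun r hr => ⟨ht₀0.trans hr.1.le, hr.2⟩)
          have h3 : nhdsWithin t₀ (Ioc t₀ T) = nhdsWithin t₀ (Ioi t₀) :=
            nhdsWithin_Ioc_eq_nhdsGT (lt_of_lt_of_le ht₀lt ht.2)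
          have h4 : Filter.Tendsto x (nhdsWithin t₀ (Ioc t₀ T)) (nhds (x t₀)) := h2
          rwa [h3] at h4
        have hGtd : Filter.Tendsto (fun r => x₀ + ∫ s in (0:ℝ)..r, c s)
            (nhdsWithin t₀ (Ioi t₀))
            (nhds (x₀ + ∫ s in (0:ℝ)..t₀, c s)) := by
          have h1 : ContinuousWithinAt (fun r => ∫ s in (0:ℝ)..r, c s)
              (Icc (0:ℝ) T) t₀ := hGcont t₀ ht₀T
          have h2 : ContinuousWithinAt (fun r => ∫ s in (0:ℝ)..r, c s)
              (Ioc t₀ T) t₀ := h1.mono (fun r hr => ⟨ht₀0.trans hr.1.le, hr.2⟩)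
          have h3 : nhdsWithin t₀ (Ioc t₀ T) = nhdsWithin t₀ (Ioi t₀) :=
            nhdsWithin_Ioc_eq_nhdsGT (lt_of_lt_of_le ht₀lt ht.2)
          have h4 : Filter.Tendsto (fun r => ∫ s in (0:ℝ)..r, c s)
              (nhdsWithin t₀ (Ioc t₀ T)) (nhds (∫ s in (0:ℝ)..t₀, c s)) := h2
          rw [h3] at h4
          exact (tendsto_const_nhds).add h4
        have heq := tendsto_nhds_unique_of_eventuallyEq hxtd hGtd hev
        have h5 := hxeq' t₀ ht₀T
        have h7 : x₀ + (∫ s in (0:ℝ)..t₀, aa s) + (∫ s in (0:ℝ)..t₀, c s)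
            = x₀ + ∫ s in (0:ℝ)..t₀, c s := by rw [← h5, heq]
        have h8 : x₀ + (∫ s in (0:ℝ)..t₀, aa s) = x₀ := by
          have := add_right_cancel h7
          rw [this]
        rwa [add_eq_left] at h8
      · exact intervalIntegral.integral_undef (fun hii => hgd₀
          ((intervalIntegrable_iff_integrableOn_Ioc_of_le ht₀0).1 hii))
    -- the equation on [t₀, t]
    have hsub : Icc t₀ t ⊆ Icc (0:ℝ) T := Icc_subset_Icc ht₀0 ht.2
    have hxid2 : ∀ r ∈ Icc t₀ t, x r = x t₀ + ∫ s in t₀..r, c s := by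
      intro r hr
      have hrT : r ∈ Icc (0:ℝ) T := hsub hr
      rcases eq_or_lt_of_le hr.1 with he | hlt
      · rw [← he, intervalIntegral.integral_same, add_zero]
      · have h1 := hxeq' r hrT
        rw [hAzero r hlt hr.2, add_zero] at h1
        have h2 := hxeq' t₀ ht₀T
        rw [hA₀, add_zero] at h2
        have h3 : (∫ s in (0:ℝ)..r, c s) - (∫ s in (0:ℝ)..t₀, c s)
            = ∫ s in t₀..r, c s :=
          intervalIntegral.integral_interval_sub_left (hcii 0 h0T r hrT)
            (hcii 0 h0T t₀ ht₀T)
        rw [h1, h2, ← h3]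
        abel
    -- energy estimate on [t₀, t]
    obtain ⟨ρ₂, hρ₂def⟩ : ∃ f : ℝ → ℝ, f = fun s => 2*φ s + 4*φ s * u s := ⟨_, rfl⟩
    have hρ₂val : ∀ s, ρ₂ s = 2*φ s + 4*φ s * u s := fun s => by rw [hρ₂def]
    have hρ₂Int : IntegrableOn ρ₂ (Icc t₀ t) := by
      have h0 : IntegrableOn (fun s => 2 * φ s) (Icc (0:ℝ) T) volume := hφInt.const_mul 2
      have h0' : IntegrableOn (fun s => 4 * φ s) (Icc (0:ℝ) T) volume := hφInt.const_mul 4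
      have h1 : IntegrableOn (fun s => 2 * φ s) (Icc t₀ t) volume := h0.mono_set hsub
      have h3 : IntegrableOn (fun s => u s * (4 * φ s)) (Icc t₀ t) := by
        apply Integrable.bdd_mul (c := M^2) (h0'.mono_set hsub)
          hucont.aestronglyMeasurable.restrict
        refine Filter.Eventually.of_forall (fun s => ?_)
        rw [Real.norm_eq_abs, abs_of_nonneg (hunn s)]
        exact huM s
      have hsum : IntegrableOn (fun s => 2 * φ s + u s * (4 * φ s)) (Icc t₀ t) volume :=
        h1.add h3
      exact hsum.congr_fun (fun s _ => by rw [hρ₂val s]; ring) measurableSet_Icc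
    have hbd2 : ∀ s ∈ Icc t₀ t, 2*⟪c s, x s⟫ ≤ ρ₂ s := by
      intro s hs
      have hsT : s ∈ Icc (0:ℝ) T := hsub hs
      have hxx : x' s = x s := hx'eq s hsT
      have h2 : ⟪c s, x s⟫ ≤ ‖c s‖ * ‖x s‖ := real_inner_le_norm _ _
      have h3 : ‖c s‖ = φ s * (1 + ‖x s‖) := by rw [hφc s, hxx]
      have h4 : u s = ‖x s‖^2 := by rw [huval s, hxx]
      have h5 := hρ₂val s
      have hy := norm_nonneg (x s)
      nlinarith [hφnn s, mul_nonneg (hφnn s) (sq_nonneg (1 - ‖x s‖))]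
    have hen2 := energy_ineq ht₀le x c ρ₂ (hcInt.mono_set hsub) hρ₂Int
      (hxcont.mono hsub) hxid2 hbd2 t (right_mem_Icc.2 ht₀le)
    -- bound at t₀
    have ht₀B : u t₀ ≤ B t₀ := by
      by_cases hgd₀ : IntegrableOn aa (Ioc 0 t₀)
      · exact hgood t₀ ht₀T hgd₀
      · have ht₀pos : 0 < t₀ := by
          rcases eq_or_lt_of_le ht₀0 with h | h
          · exfalso
            apply hgd₀
            rw [← h, Ioc_self]
            exact integrableOn_empty
          · exact h
        have hevB : ∀ᶠ r in nhdsWithin t₀ (Iio t₀), u r ≤ B r := by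
          filter_upwards [Ico_mem_nhdsLT_of_mem (⟨ht₀pos, le_rfl⟩ : t₀ ∈ Ioc 0 t₀)]
          intro r hr
          exact hgood r ⟨hr.1, (hr.2.le.trans ht₀le).trans ht.2⟩
            (hgoodlt r hr.1 hr.2)
        have hutd : Filter.Tendsto u (nhdsWithin t₀ (Iio t₀)) (nhds (u t₀)) :=
          (hucont.tendsto t₀).mono_left nhdsWithin_le_nhds
        have hBtd : Filter.Tendsto B (nhdsWithin t₀ (Iio t₀)) (nhds (B t₀)) := by
          have h1 : ContinuousWithinAt B (Icc (0:ℝ) T) t₀ := hBcont t₀ ht₀T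
          have h2 : ContinuousWithinAt B (Ico 0 t₀) t₀ :=
            h1.mono (fun r hr => ⟨hr.1, (hr.2.le.trans ht₀le).trans ht.2⟩)
          have h3 : nhdsWithin t₀ (Ico 0 t₀) = nhdsWithin t₀ (Iio t₀) :=
            nhdsWithin_Ico_eq_nhdsLT ht₀pos
          have h4 : Filter.Tendsto B (nhdsWithin t₀ (Ico 0 t₀)) (nhds (B t₀)) := h2
          rwa [h3] at h4
        exact le_of_tendsto_of_tendsto hutd hBtd hevB
    -- combine
    have hρcomp : (∫ s in t₀..t, ρ₂ s) ≤ ∫ s in t₀..t, ρ s := by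
      have hii2 : IntervalIntegrable ρ₂ volume t₀ t := by
        rw [intervalIntegrable_iff_integrableOn_Ioc_of_le ht₀le]
        exact hρ₂Int.mono_set Ioc_subset_Icc_self
      apply intervalIntegral.integral_mono_on ht₀le hii2 (hρii t₀ ht₀T t ht)
      intro s hs
      rw [hρ₂val s, hρval s]
      have := mul_nonneg hκ.le (hunn s)
      nlinarith [hφnn s, hunn s]
    have hBadd : B t₀ + ∫ s in t₀..t, ρ s = B t := by
      rw [hBval, hBval]
      have := intervalIntegral.integral_add_adjacent_intervals
        (hρii 0 h0T t₀ ht₀T) (hρii t₀ ht₀T t ht)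
      linarith
    have hut₀ : u t₀ = ‖x t₀‖^2 := by rw [huval, hx'eq t₀ ht₀T]
    have hutt : u t = ‖x t‖^2 := by rw [huval, hx'eq t ht]
    rw [hutt]
    rw [hut₀] at ht₀B
    linarith
  -- integrability of the Grönwall integrand
  have hκuInt : IntegrableOn (fun s => (κ + 4*φ s) * u s) (Icc (0:ℝ) T) volume := by
    have h2 : IntegrableOn (fun s => κ * u s) (Icc (0:ℝ) T) :=
      (continuous_const.mul hucont).integrableOn_Icc
    have h0' : IntegrableOn (fun s => 4 * φ s) (Icc (0:ℝ) T) volume := hφInt.const_mul 4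
    have h3 : IntegrableOn (fun s => u s * (4 * φ s)) (Icc (0:ℝ) T) := by
      apply Integrable.bdd_mul (c := M^2) h0' hucont.aestronglyMeasurable.restrict
      refine Filter.Eventually.of_forall (fun s => ?_)
      rw [Real.norm_eq_abs, abs_of_nonneg (hunn s)]
      exact huM s
    have h4 : IntegrableOn (fun s => κ * u s + u s * (4 * φ s)) (Icc (0:ℝ) T) volume :=
      h2.add h3
    exact h4.congr_fun (fun s _ => by ring) measurableSet_Icc
  have hκuii : ∀ t ∈ Icc (0:ℝ) T,
      IntervalIntegrable (fun s => (κ + 4*φ s) * u s) volume 0 t :=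
    fun t ht => (hκuInt.mono_set (uIcc_subset_Icc h0T ht)).intervalIntegrable
  -- Grönwall hypothesis
  obtain ⟨C, hC⟩ : ∃ r : ℝ, r = ‖x₀‖^2 + κ*T + 2*I := ⟨_, rfl⟩
  have hC0 : 0 ≤ C := by
    rw [hC]
    nlinarith [hI0, mul_pos hκ hT, sq_nonneg ‖x₀‖]
  have hgH : ∀ t ∈ Icc (0:ℝ) T, u t ≤ C + ∫ s in (0:ℝ)..t, (κ + 4*φ s) * u s := by
    intro t ht
    have h1 := hclaim t ht
    rw [hBval t] at h1
    have h2 : (∫ s in (0:ℝ)..t, ρ s)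
        = (∫ s in (0:ℝ)..t, 2 * φ s) + ∫ s in (0:ℝ)..t, (κ + 4*φ s) * u s := by
      rw [← intervalIntegral.integral_add ((hφii 0 h0T t ht).const_mul 2)
        (hκuii t ht)]
      apply intervalIntegral.integral_congr
      intro s _
      rw [hρval s]
    have h3 : (∫ s in (0:ℝ)..t, 2 * φ s) ≤ 2*I := by
      rw [intervalIntegral.integral_const_mul]
      linarith [hφIt t ht]
    rw [hC]
    linarith
  have hφGnn : ∀ s, 0 ≤ κ + 4*φ s := fun s => by nlinarith [hφnn s, hκ.le]
  have hφGInt : IntegrableOn (fun s => κ + 4*φ s) (Icc (0:ℝ) T) := by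
    have h0' : IntegrableOn (fun s => 4 * φ s) (Icc (0:ℝ) T) volume := hφInt.const_mul 4
    exact (continuous_const.integrableOn_Icc).add h0'
  have hgron := gronwall_int hTnn hC0 u (fun s => κ + 4*φ s) hucont hunn
    hφGInt hφGnn hgH
  -- conclusion
  intro t ht
  have h1 := hgron t ht
  have h2 : (∫ s in (0:ℝ)..t, (κ + 4*φ s)) ≤ κ*T + 4*I := by
    rw [intervalIntegral.integral_add intervalIntegrable_const
      ((hφii 0 h0T t ht).const_mul 4)]
    rw [intervalIntegral.integral_const, intervalIntegral.integral_const_mul]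
    have h5 := hφIt t ht
    have h6 : (t - 0) • κ ≤ κ * T := by
      rw [smul_eq_mul, sub_zero]
      nlinarith [ht.2, hκ.le, ht.1]
    linarith
  have h3 : C * Real.exp (∫ s in (0:ℝ)..t, (κ + 4*φ s))
      ≤ C * Real.exp (κ*T + 4*I) :=
    mul_le_mul_of_nonneg_left (Real.exp_le_exp.2 h2) hC0
  have h4 : u t = ‖x t‖^2 := by rw [huval, hx'eq t ht]
  have hIeq : (∫⁻ s in Icc (0:ℝ) T,
      ∫⁻ v, gNorm0 d g s v * ENNReal.ofReal |ψ (s, v) - 1| ∂ν).toReal = I := by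
    rw [hI]
    simp only [hL]
  rw [hIeq, ← h4]
  calc u t ≤ C * Real.exp (∫ s in (0:ℝ)..t, (κ + 4*φ s)) := h1
    _ ≤ C * Real.exp (κ*T + 4*I) := h3
    _ = (‖x₀‖ ^ 2 + κ * T + 2 * I) * Real.exp (κ * T + 4 * I) := by rw [hC]
end

section
/- Let T > 0, d ∈ ℕ, and let (X, 𝒳, ν) be a σ-finite measure space. Let g : [0,T] × ℝ^d × X → ℝ^d be measurable and suppose: (a) for each s ∈ [0,T] and y ∈ ℝ^d, g(s,y,·) ∈ L²(X, ν; ℝ^d), and for each s the map y ↦ g(s,y,·) (from ℝ^d to L²(X, ν; ℝ^d)) is continuous; (b) there exists κ ∈ (0,∞) with ∫_X ‖g(s,v)‖₀² ν(dv) ≤ κ for all s ∈ [0,T], where ‖g(s,v)‖₀ = sup_{y ∈ ℝ^d} ‖g(s,y,v)‖ / (1 + ‖y‖); (c) there exists δ₀ ∈ (0,∞) such that ∫_E e^{δ₀·‖g(s,v)‖₀} ν(dv) ds < ∞ for every measurable E ⊆ [0,T] × X with (λ_T ⊗ ν)(E) < ∞. Let ψ : [0,T] × X → [0,∞) be measurable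 with ∫_{[0,T]×X} l(ψ(s,v)) ν(dv) ds < ∞. Then for almost every s ∈ [0,T], the map y ↦ ∫_X (g(s,y,v)/(1 + ‖y‖))·(ψ(s,v) − 1) ν(dv) from ℝ^d to ℝ^d is continuous. -/
open MeasureTheory Set Filter intervalIntegral
open scoped ENNReal

lemma log_ge_one_sub_inv {a : ℝ} (h : 0 < a) : 1 - a⁻¹ ≤ Real.log a := by
  have := Real.log_le_sub_one_of_pos (inv_pos.2 h)
  rw [Real.log_inv] at this; linarith

lemma ell_nonneg_s13 {a : ℝ} (ha : 0 ≤ a) : 0 ≤ ell a := by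
  rcases eq_or_lt_of_le ha with h | h
  · simp [ell, ← h]
  · have h1 := log_ge_one_sub_inv h
    have h2 : a * a⁻¹ = 1 := mul_inv_cancel₀ h.ne'
    unfold ell
    nlinarith [mul_le_mul_of_nonneg_left h1 ha]

lemma zero_not_mem_uIcc {a b : ℝ} (ha : 0 < a) (hb : 0 < b) : (0:ℝ) ∉ uIcc a b := by
  simp only [Set.mem_uIcc]; push_neg; constructor <;> intro h <;> linarith

lemma intInt_log {a b : ℝ} (ha : 0 < a) (hb : 0 < b) :
    IntervalIntegrable Real.log volume a b :=
  intervalIntegrable_log (zero_not_mem_uIcc ha hb)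

lemma ell_integral {a : ℝ} (ha : 0 < a) : ell a = ∫ x in (1:ℝ)..a, Real.log x := by
  rw [integral_log]
  simp [ell]

lemma ell_sq {a : ℝ} (h0 : 0 ≤ a) (h2 : a ≤ 2) : (a - 1)^2 ≤ 4 * ell a := by
  rcases eq_or_lt_of_le h0 with h | h
  · simp [ell, ← h]
  rcases le_total a 1 with hle | hge
  · -- 0 < a ≤ 1
    have hint : ∫ x in a..(1:ℝ), Real.log x ≤ ∫ x in a..(1:ℝ), (x - 1) := by
      apply integral_mono_on hle (intInt_log h one_pos)
        ((by continuity : Continuous fun x:ℝ => x - 1).intervalIntegrable _ _)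
      intro x hx
      exact Real.log_le_sub_one_of_pos (lt_of_lt_of_le h hx.1)
    have hcomp : ∫ x in a..(1:ℝ), (x - 1) = (1 - a^2)/2 - (1 - a) := by
      rw [intervalIntegral.integral_sub (intervalIntegral.intervalIntegrable_id)
        (intervalIntegrable_const), integral_id, intervalIntegral.integral_const]
      simp
    have hsymm : ell a = - ∫ x in a..(1:ℝ), Real.log x := by
      rw [ell_integral h, intervalIntegral.integral_symm]
    nlinarith
  · -- 1 ≤ a ≤ 2
    have hint : ∫ x in (1:ℝ)..a, (x - 1)/2 ≤ ∫ x in (1:ℝ)..a, Real.log x := by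
      apply integral_mono_on hge
        ((by continuity : Continuous fun x:ℝ => (x - 1)/2).intervalIntegrable _ _)
        (intInt_log one_pos h)
      intro x hx
      have hx1 : (1:ℝ) ≤ x := hx.1
      have hx2 : x ≤ 2 := le_trans hx.2 h2
      have h1 := log_ge_one_sub_inv (lt_of_lt_of_le one_pos hx1)
      have h3 : x * x⁻¹ = 1 := mul_inv_cancel₀ (by linarith)
      nlinarith
    have hcomp : ∫ x in (1:ℝ)..a, (x - 1)/2 = ((a^2 - 1)/2 - (a - 1))/2 := by
      have : ∫ x in (1:ℝ)..a, (x - 1)/2 = (∫ x in (1:ℝ)..a, (x - 1)) / 2 := by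
        rw [intervalIntegral.integral_div]
      rw [this, intervalIntegral.integral_sub (intervalIntegral.intervalIntegrable_id)
        (intervalIntegrable_const), integral_id, intervalIntegral.integral_const]
      simp
    rw [ell_integral (by linarith : (0:ℝ) < a)] at *
    nlinarith

lemma ell_two_le {b : ℝ} (hb : 2 ≤ b) : ell 2 ≤ ell b := by
  have hb0 : (0:ℝ) < b := by linarith
  have hadj := integral_add_adjacent_intervals (intInt_log one_pos two_pos) (intInt_log two_pos hb0)
  have hnn : 0 ≤ ∫ x in (2:ℝ)..b, Real.log x := by
    apply intervalIntegral.integral_nonneg hb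
    intro x hx
    exact Real.log_nonneg (by linarith [hx.1])
  rw [ell_integral two_pos, ell_integral hb0, ← hadj]
  linarith

lemma ell_two_pos : 0 < ell 2 := by
  have := Real.log_two_gt_d9
  unfold ell; nlinarith

lemma ell_entropy {a : ℝ} (b : ℝ) (ha : 0 ≤ a) : a * b ≤ ell a + Real.exp b := by
  rcases eq_or_lt_of_le ha with h | h
  · simp [ell, ← h]; positivity
  · have h1 : (b - Real.log a) + 1 ≤ Real.exp (b - Real.log a) := Real.add_one_le_exp _
    rw [Real.exp_sub, Real.exp_log h] at h1
    have h2 := mul_le_mul_of_nonneg_left h1 ha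
    have h3 : a * (Real.exp b / a) = Real.exp b := by field_simp
    unfold ell
    nlinarith [Real.exp_pos b]

lemma measurable_ell : Measurable ell :=
  ((measurable_id.mul Real.measurable_log).sub measurable_id).add measurable_const


lemma ae_norm_le_of_dense {X : Type*} [MeasurableSpace X] {ν : Measure X}
    {Y : Type*} [NormedAddCommGroup Y]
    {F : Type*} [NormedAddCommGroup F]
    (G : Y → X → F) (D : ℕ → Y) (hD : DenseRange D)
    (m : X → ℝ≥0∞) (hm : Measurable m) (hm2 : ∫⁻ v, (m v)^2 ∂ν ≠ ⊤)
    (hnmeas : ∀ y y' : Y, AEMeasurable (fun v => ENNReal.ofReal (‖G y v - G y' v‖^2)) ν)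
    (hDdom : ∀ n v, ENNReal.ofReal ‖G (D n) v‖ ≤ ENNReal.ofReal (1 + ‖D n‖) * m v)
    (hcont : ∀ y : Y, Tendsto (fun y' => ∫⁻ v, ENNReal.ofReal (‖G y' v - G y v‖^2) ∂ν)
      (nhds y) (nhds 0))
    (y : Y) : ∀ᵐ v ∂ν, ENNReal.ofReal ‖G y v‖ ≤ ENNReal.ofReal (1 + ‖y‖) * m v := by
  have hfin : ∀ᵐ v ∂ν, m v < ⊤ := by
    filter_upwards [ae_lt_top (hm.pow_const 2) hm2] with v hv
    by_contra htop
    rw [not_lt, top_le_iff] at htop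
    rw [htop] at hv
    simp [pow_two] at hv
  -- the exceptional sets
  set A : ℕ → ℕ → Set X := fun q K => {v | m v ≤ K ∧
    ENNReal.ofReal (1 + ‖y‖) * m v + ENNReal.ofReal (1/(q+1)) ≤ ENNReal.ofReal ‖G y v‖} with hA
  have key : ∀ q K : ℕ, ν (A q K) = 0 := by
    intro q K
    have hq' : (0:ℝ) < 1/(q+1) := by positivity
    set q' : ℝ := 1/(q+1) with hq'def
    set t : ℝ := q'/2 with htdef
    have ht : 0 < t := by positivity
    have key2 : ∀ ε : ℝ, 0 < ε → ν (A q K) ≤ ENNReal.ofReal ε := by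
      intro ε hε
      -- find a good point of the dense sequence
      have h1 : ∀ᶠ y' in nhds y,
          (∫⁻ v, ENNReal.ofReal (‖G y' v - G y v‖^2) ∂ν) < ENNReal.ofReal (ε * t^2) :=
        (hcont y).eventually_lt_const (by positivity)
      have h2 : ∀ᶠ y' in nhds y, ‖y' - y‖ < q'/(2*(K+1)) := by
        have : Metric.ball y (q'/(2*(K+1))) ∈ nhds y := Metric.ball_mem_nhds y (by positivity)
        filter_upwards [this] with y' hy'
        rwa [Metric.mem_ball, dist_eq_norm] at hy'
      obtain ⟨U, hUsub, hUopen, hyU⟩ := mem_nhds_iff.1 (h1.and h2)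
      obtain ⟨n, hxU⟩ := hD.exists_mem_open hUopen ⟨y, hyU⟩
      obtain ⟨hn1, hn2⟩ := hUsub hxU
      -- A q K ⊆ Chebyshev set
      have hsub : A q K ⊆ {v | ENNReal.ofReal (t^2) ≤
          ENNReal.ofReal (‖G (D n) v - G y v‖^2)} := by
        intro v hv
        obtain ⟨hvK, hvge⟩ := hv
        have hmfin : m v ≠ ⊤ := fun h => by rw [h, top_le_iff] at hvK; exact ENNReal.natCast_ne_top K hvK
        set r : ℝ := (m v).toReal with hrdef
        have hr0 : 0 ≤ r := ENNReal.toReal_nonneg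
        have hmv : m v = ENNReal.ofReal r := (ENNReal.ofReal_toReal hmfin).symm
        have hrK : r ≤ K := by
          simpa [hrdef] using ENNReal.toReal_mono (ENNReal.natCast_ne_top K) hvK
        have e1 : (1 + ‖y‖) * r + q' ≤ ‖G y v‖ := by
          rw [hmv, ← ENNReal.ofReal_mul (by positivity), ← ENNReal.ofReal_add (by positivity)
            (by positivity)] at hvge
          exact (ENNReal.ofReal_le_ofReal_iff (norm_nonneg _)).1 hvge
        have e2 : ‖G (D n) v‖ ≤ (1 + ‖D n‖) * r := by
          have := hDdom n v
          rw [hmv, ← ENNReal.ofReal_mul (by positivity)] at this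
          exact (ENNReal.ofReal_le_ofReal_iff (by positivity)).1 this
        have e3 : ‖D n‖ - ‖y‖ ≤ ‖D n - y‖ := norm_sub_norm_le _ _
        have e4 : ‖D n - y‖ < q'/(2*(K+1)) := hn2
        have e5 : t ≤ ‖G (D n) v - G y v‖ := by
          have e6 : ‖G y v‖ - ‖G (D n) v‖ ≤ ‖G (D n) v - G y v‖ := by
            rw [norm_sub_rev]; exact norm_sub_norm_le _ _
          have hK1 : (0:ℝ) < K + 1 := by positivity
          have e7 : ‖D n - y‖ * r ≤ (q'/(2*(K+1))) * K := by
            apply mul_le_mul e4.le hrK hr0 (by positivity)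
          have e8 : (q'/(2*(K+1))) * K ≤ q'/2 := by
            rw [div_mul_eq_mul_div, div_le_div_iff₀ (by positivity) (by positivity)]
            nlinarith
          nlinarith [norm_nonneg (D n - y), norm_nonneg y]
        have : t^2 ≤ ‖G (D n) v - G y v‖^2 := by nlinarith [norm_nonneg (G (D n) v - G y v)]
        exact ENNReal.ofReal_le_ofReal this
      have hcheb := mul_meas_ge_le_lintegral₀ (hnmeas (D n) y) (ENNReal.ofReal (t^2))
      have hle : ν (A q K) ≤ ν {v | ENNReal.ofReal (t^2) ≤
          ENNReal.ofReal (‖G (D n) v - G y v‖^2)} := measure_mono hsub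
      have hbound : ENNReal.ofReal (t^2) * ν (A q K) ≤ ENNReal.ofReal ε * ENNReal.ofReal (t^2) := by
        calc ENNReal.ofReal (t^2) * ν (A q K) ≤ ENNReal.ofReal (t^2) * ν _ :=
              mul_le_mul_right hle _
          _ ≤ ∫⁻ v, ENNReal.ofReal (‖G (D n) v - G y v‖^2) ∂ν := hcheb
          _ ≤ ENNReal.ofReal (ε * t^2) := hn1.le
          _ = ENNReal.ofReal ε * ENNReal.ofReal (t^2) := ENNReal.ofReal_mul hε.le
      rw [mul_comm] at hbound
      exact (ENNReal.mul_le_mul_iff_left (by simp only [ne_eq, ENNReal.ofReal_eq_zero, not_le]; positivity) ENNReal.ofReal_ne_top).1 hbound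
    -- conclude ν (A q K) = 0
    refine le_antisymm ?_ zero_le
    refine ENNReal.le_of_forall_pos_le_add fun ε hε _ => ?_
    rw [zero_add]
    calc ν (A q K) ≤ ENNReal.ofReal ε := key2 ε hε
      _ ≤ ε := ENNReal.ofReal_coe_nnreal.le
  -- combine
  have hnull : ν ({v | m v = ⊤} ∪ ⋃ (q : ℕ) (K : ℕ), A q K) = 0 := by
    apply measure_union_null
    · have h' : ∀ᵐ v ∂ν, m v ≠ ⊤ := hfin.mono fun v h => h.ne
      rw [ae_iff] at h'
      simpa using h'
    · exact measure_iUnion_null fun q => measure_iUnion_null fun K => key q K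
  rw [ae_iff]
  apply measure_mono_null _ hnull
  intro v hv
  simp only [mem_setOf_eq, not_le] at hv
  by_cases hmtop : m v = ⊤
  · exact Or.inl hmtop
  right
  have hfin2 : ENNReal.ofReal (1 + ‖y‖) * m v ≠ ⊤ :=
    ENNReal.mul_ne_top ENNReal.ofReal_ne_top hmtop
  have hgap : ∃ q : ℕ, ENNReal.ofReal (1 + ‖y‖) * m v + ENNReal.ofReal (1/(q+1)) ≤
      ENNReal.ofReal ‖G y v‖ := by
    set a := ENNReal.ofReal (1 + ‖y‖) * m v
    have ha : a.toReal < ‖G y v‖ := by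
      have := ENNReal.toReal_strict_mono ENNReal.ofReal_ne_top hv
      rwa [ENNReal.toReal_ofReal (norm_nonneg _)] at this
    obtain ⟨q, hq⟩ := exists_nat_one_div_lt (show (0:ℝ) < ‖G y v‖ - a.toReal by linarith)
    refine ⟨q, ?_⟩
    have : a = ENNReal.ofReal a.toReal := (ENNReal.ofReal_toReal hfin2).symm
    rw [this, ← ENNReal.ofReal_add ENNReal.toReal_nonneg (by positivity)]
    exact ENNReal.ofReal_le_ofReal (by push_cast; push_cast at hq; linarith)
  obtain ⟨q, hq⟩ := hgap
  obtain ⟨K, hK⟩ := ENNReal.exists_nat_gt hmtop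
  exact mem_iUnion.2 ⟨q, mem_iUnion.2 ⟨K, hK.le, hq⟩⟩

lemma ennreal_mul_le_sq_add_sq (a b : ℝ≥0∞) : a * b ≤ a^2 + b^2 := by
  rcases le_total a b with h | h
  · calc a * b ≤ b * b := mul_le_mul_left h b
      _ = b^2 := (sq b).symm
      _ ≤ a^2 + b^2 := le_add_self
  · calc a * b ≤ a * a := mul_le_mul_right h a
      _ = a^2 := (sq a).symm
      _ ≤ a^2 + b^2 := le_self_add

lemma slice_continuity {X : Type*} [MeasurableSpace X] {ν : Measure X}
    {Y : Type*} [NormedAddCommGroup Y]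
    {F : Type*} [NormedAddCommGroup F] [NormedSpace ℝ F] [CompleteSpace F]
    (δ : ℝ) (hδ : 0 < δ)
    (G : Y → X → F) (hGsm : ∀ y, AEStronglyMeasurable (G y) ν)
    (m em : X → ℝ≥0∞) (hm : Measurable m) (hem : Measurable em)
    (hdom : ∀ y, ∀ᵐ v ∂ν, ENNReal.ofReal ‖G y v‖ ≤ ENNReal.ofReal (1 + ‖y‖) * m v)
    (hent : ∀ (a : ℝ), 0 ≤ a → ∀ v,
      ENNReal.ofReal a * (ENNReal.ofReal δ * m v) ≤ ENNReal.ofReal (ell a) + em v)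
    (hsmall : ∀ v, m v < 1 → em v ≤ ENNReal.ofReal (Real.exp δ))
    (hm2 : ∫⁻ v, (m v)^2 ∂ν ≠ ⊤)
    (hemint : ∫⁻ v in {v | 1 ≤ m v}, em v ∂ν ≠ ⊤)
    (χ : X → ℝ) (hχm : Measurable χ) (hχ0 : ∀ v, 0 ≤ χ v)
    (hχcost : ∫⁻ v, ENNReal.ofReal (ell (χ v)) ∂ν ≠ ⊤)
    (hcont : ∀ y : Y, Tendsto (fun y' => ∫⁻ v, ENNReal.ofReal (‖G y' v - G y v‖^2) ∂ν)
      (nhds y) (nhds 0)) :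
    Continuous (fun y : Y => ∫ v, ((χ v - 1) / (1 + ‖y‖)) • G y v ∂ν) := by
  have hδe0 : ENNReal.ofReal δ ≠ 0 := by simp [hδ]
  -- the weight W
  have hmeas1 : MeasurableSet {v : X | 1 ≤ m v} := hm measurableSet_Ici
  have hmeas2 : MeasurableSet {v : X | 2 < χ v} := measurableSet_lt measurable_const hχm
  set W : X → ℝ≥0∞ := fun v => ENNReal.ofReal (ell (χ v)) + ({v : X | 1 ≤ m v}.indicator em) v
      + ({v : X | 2 < χ v}.indicator (fun _ => ENNReal.ofReal (Real.exp δ))) v with hWdef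
  have hWmeas : Measurable W :=
    (((ENNReal.measurable_ofReal.comp (measurable_ell.comp hχm)).add
      (hem.indicator hmeas1)).add (measurable_const.indicator hmeas2))
  have hellmeas : Measurable fun v => ENNReal.ofReal (ell (χ v)) :=
    ENNReal.measurable_ofReal.comp (measurable_ell.comp hχm)
  -- ν {2 < χ} is finite
  have hν2 : ν {v : X | 2 < χ v} ≠ ⊤ := by
    have hcheb := mul_meas_ge_le_lintegral₀ (μ := ν)
      (hellmeas.aemeasurable) (ENNReal.ofReal (ell 2))
    have hsub : {v : X | 2 < χ v} ⊆ {v : X | ENNReal.ofReal (ell 2) ≤ ENNReal.ofReal (ell (χ v))} :=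
      fun v hv => ENNReal.ofReal_le_ofReal (ell_two_le (le_of_lt hv))
    intro htop
    have h1 : ENNReal.ofReal (ell 2) * ν {v : X | 2 < χ v} ≤
        ∫⁻ v, ENNReal.ofReal (ell (χ v)) ∂ν :=
      le_trans (mul_le_mul_right (measure_mono hsub) _) hcheb
    rw [htop, ENNReal.mul_top (by simp [ell_two_pos])] at h1
    exact hχcost (top_le_iff.1 h1)
  -- W is integrable
  have hWint : ∫⁻ v, W v ∂ν ≠ ⊤ := by
    rw [hWdef]
    rw [lintegral_add_right _ (measurable_const.indicator hmeas2),
      lintegral_add_right _ (hem.indicator hmeas1)]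
    rw [lintegral_indicator hmeas1, lintegral_indicator_const hmeas2]
    exact ENNReal.add_ne_top.2 ⟨ENNReal.add_ne_top.2 ⟨hχcost, hemint⟩,
      ENNReal.mul_ne_top ENNReal.ofReal_ne_top hν2⟩
  -- em ≤ W on {2 < χ}
  have hem_le_W : ∀ v, 2 < χ v → em v ≤ W v := by
    intro v hv
    rcases lt_or_ge (m v) 1 with hmv | hmv
    · calc em v ≤ ENNReal.ofReal (Real.exp δ) := hsmall v hmv
        _ = ({v : X | 2 < χ v}.indicator (fun _ => ENNReal.ofReal (Real.exp δ))) v :=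
            (Set.indicator_of_mem (show v ∈ {v : X | 2 < χ v} from hv) (fun _ => ENNReal.ofReal (Real.exp δ))).symm
        _ ≤ W v := le_add_self
    · calc em v = ({v : X | 1 ≤ m v}.indicator em) v := (Set.indicator_of_mem (show v ∈ {v : X | 1 ≤ m v} from hmv) em).symm
        _ ≤ W v := le_trans le_add_self le_self_add
  -- entropy bound with inverse
  have hent' : ∀ (a : ℝ), 0 ≤ a → ∀ v, ENNReal.ofReal a * m v ≤
      (ENNReal.ofReal δ)⁻¹ * (ENNReal.ofReal (ell a) + em v) := by
    intro a ha v
    have h1 : (ENNReal.ofReal δ)⁻¹ * (ENNReal.ofReal a * (ENNReal.ofReal δ * m v)) =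
        ENNReal.ofReal a * m v := by
      rw [mul_comm (ENNReal.ofReal a) (ENNReal.ofReal δ * m v), ← mul_assoc, ← mul_assoc,
        ENNReal.inv_mul_cancel hδe0 ENNReal.ofReal_ne_top, one_mul, mul_comm]
    rw [← h1]
    exact mul_le_mul_right (hent a ha v) _
  -- Step A : integrability of the entropy-weight pairing
  have hKK : ∫⁻ v, ENNReal.ofReal |χ v - 1| * m v ∂ν ≠ ⊤ := by
    have hptwise : ∀ v, ENNReal.ofReal |χ v - 1| * m v ≤
        (ENNReal.ofReal (4 * ell (χ v)) + (m v)^2) +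
        (ENNReal.ofReal δ)⁻¹ * (ENNReal.ofReal (ell (χ v)) + W v) := by
      intro v
      rcases le_or_gt (χ v) 2 with hv2 | hv2
      · refine le_trans (le_trans (ennreal_mul_le_sq_add_sq _ _) ?_) le_self_add
        refine add_le_add_left ?_ _
        rw [← ENNReal.ofReal_pow (abs_nonneg _), sq_abs]
        exact ENNReal.ofReal_le_ofReal (ell_sq (hχ0 v) hv2)
      · refine le_trans ?_ le_add_self
        calc ENNReal.ofReal |χ v - 1| * m v ≤ ENNReal.ofReal (χ v) * m v := by
              apply mul_le_mul_left
              apply ENNReal.ofReal_le_ofReal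
              rw [abs_of_nonneg (by linarith)]; linarith
          _ ≤ (ENNReal.ofReal δ)⁻¹ * (ENNReal.ofReal (ell (χ v)) + em v) := hent' _ (hχ0 v) v
          _ ≤ (ENNReal.ofReal δ)⁻¹ * (ENNReal.ofReal (ell (χ v)) + W v) :=
              mul_le_mul_right (add_le_add_right (hem_le_W v hv2) _) _
    have h2 : ∫⁻ v, ENNReal.ofReal |χ v - 1| * m v ∂ν ≤
        (∫⁻ v, ENNReal.ofReal (4 * ell (χ v)) + (m v)^2 ∂ν) +
        ∫⁻ v, (ENNReal.ofReal δ)⁻¹ * (ENNReal.ofReal (ell (χ v)) + W v) ∂ν := by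
      refine le_trans (lintegral_mono hptwise) (le_of_eq ?_)
      exact lintegral_add_right _ ((hellmeas.add hWmeas).const_mul _)
    refine ne_top_of_le_ne_top ?_ h2
    rw [lintegral_add_right _ (hm.pow_const 2), lintegral_const_mul _ (show Measurable fun v => ENNReal.ofReal (ell (χ v)) + W v from hellmeas.add hWmeas),
      lintegral_add_right _ hWmeas]
    have h4 : ∫⁻ v, ENNReal.ofReal (4 * ell (χ v)) ∂ν =
        4 * ∫⁻ v, ENNReal.ofReal (ell (χ v)) ∂ν := by
      rw [← lintegral_const_mul 4 hellmeas]
      congr 1; ext v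
      rw [ENNReal.ofReal_mul (by norm_num)]
      norm_num
    rw [h4]
    apply ENNReal.add_ne_top.2
    constructor
    · exact ENNReal.add_ne_top.2 ⟨ENNReal.mul_ne_top (by norm_num) hχcost, hm2⟩
    · exact ENNReal.mul_ne_top (by simp [hδ]) (ENNReal.add_ne_top.2 ⟨hχcost, hWint⟩)
  -- integrability of the integrand, for every y
  have hIntLe : ∀ y : Y, ∫⁻ v, ENNReal.ofReal ‖(χ v - 1) • G y v‖ ∂ν ≤
      ENNReal.ofReal (1 + ‖y‖) * ∫⁻ v, ENNReal.ofReal |χ v - 1| * m v ∂ν := by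
    intro y
    rw [← lintegral_const_mul' _ _ ENNReal.ofReal_ne_top]
    refine lintegral_mono_ae ?_
    filter_upwards [hdom y] with v hv
    rw [norm_smul, Real.norm_eq_abs, ENNReal.ofReal_mul (abs_nonneg _)]
    calc ENNReal.ofReal |χ v - 1| * ENNReal.ofReal ‖G y v‖
        ≤ ENNReal.ofReal |χ v - 1| * (ENNReal.ofReal (1 + ‖y‖) * m v) := mul_le_mul_right hv _
      _ = ENNReal.ofReal (1 + ‖y‖) * (ENNReal.ofReal |χ v - 1| * m v) := by ring
  have hInt : ∀ y : Y, Integrable (fun v => (χ v - 1) • G y v) ν := by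
    intro y
    refine ⟨((hχm.sub measurable_const).aestronglyMeasurable).smul (hGsm y), ?_⟩
    rw [hasFiniteIntegral_iff_norm]
    exact lt_of_le_of_lt (hIntLe y) (ENNReal.mul_lt_top ENNReal.ofReal_lt_top hKK.lt_top)
  set Gi : Y → F := fun y => ∫ v, (χ v - 1) • G y v ∂ν with hGidef
  have hGicont : Continuous Gi := by
    rw [continuous_iff_continuousAt]
    intro y₀
    have main : Tendsto (fun y => ∫⁻ v, ENNReal.ofReal |χ v - 1| *
        ENNReal.ofReal ‖G y v - G y₀ v‖ ∂ν) (nhds y₀) (nhds 0) := by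
      rw [ENNReal.tendsto_nhds_zero]
      intro ε hε
      set c₀ : ℝ≥0∞ := ENNReal.ofReal (3 + 2 * ‖y₀‖) with hc₀def
      set dinv : ℝ≥0∞ := (ENNReal.ofReal δ)⁻¹ with hdinvdef
      have hdinvtop : dinv ≠ ⊤ := by rw [hdinvdef]; simp [hδe0]
      set τ : ℕ → ℝ≥0∞ := fun n => ∫⁻ v, ({v : X | (n:ℝ) < χ v}.indicator
          (fun v => ENNReal.ofReal (ell (χ v)) + W v)) v ∂ν with hτdef
      have e1 : ∀ x : ℝ≥0∞, x ^ (2:ℝ) = x ^ 2 := fun x => by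
        rw [show (2:ℝ) = ((2:ℕ):ℝ) by norm_num, ENNReal.rpow_natCast]
      have hτtend : Tendsto τ atTop (nhds 0) := by
        have h := tendsto_lintegral_of_dominated_convergence (μ := ν)
          (F := fun n v => ({v : X | (n:ℝ) < χ v}.indicator
            (fun v => ENNReal.ofReal (ell (χ v)) + W v)) v)
          (f := fun _ => 0)
          (fun v => ENNReal.ofReal (ell (χ v)) + W v)
          (fun n => (hellmeas.add hWmeas).indicator (measurableSet_lt measurable_const hχm))
          (fun n => Filter.Eventually.of_forall fun v => Set.indicator_le_self _ _ v)
          (by rw [lintegral_add_right _ hWmeas]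
              exact ENNReal.add_ne_top.2 ⟨hχcost, hWint⟩)
          (Filter.Eventually.of_forall fun v => by
            obtain ⟨N, hN⟩ := exists_nat_gt (χ v)
            apply tendsto_atTop_of_eventually_const (i₀ := N)
            intro n hn
            apply Set.indicator_of_notMem
            simp only [mem_setOf_eq, not_lt]
            calc χ v ≤ N := hN.le
              _ ≤ (n:ℝ) := Nat.cast_le.2 hn)
        simpa using h
      have hεhalf : (0:ℝ≥0∞) < (ε/2) / (c₀ * dinv + 1) := by
        apply ENNReal.div_pos
        · exact (ENNReal.half_pos hε.ne').ne'
        · exact ENNReal.add_ne_top.2 ⟨ENNReal.mul_ne_top ENNReal.ofReal_ne_top hdinvtop, by simp⟩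
      obtain ⟨C, hCτ, hC2⟩ :=
        ((hτtend.eventually_lt_const hεhalf).and (eventually_ge_atTop 2)).exists
      set ind1 : X → ℝ≥0∞ := {v : X | χ v ≤ (C:ℝ)}.indicator (fun v => ENNReal.ofReal |χ v - 1|)
        with hind1def
      have hind1meas : Measurable ind1 :=
        (ENNReal.measurable_ofReal.comp (hχm.sub measurable_const).abs).indicator
          (measurableSet_le hχm measurable_const)
      set B : ℝ≥0∞ := ∫⁻ v, (ind1 v)^2 ∂ν with hBdef
      have hBtop : B ≠ ⊤ := by
        have hpt : ∀ v, (ind1 v)^2 ≤ ENNReal.ofReal (4 * ell (χ v)) +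
            ({v : X | 2 < χ v}.indicator (fun _ => ENNReal.ofReal ((C:ℝ)^2))) v := by
          intro v
          rw [hind1def]
          by_cases hvC : χ v ≤ (C:ℝ)
          · rw [Set.indicator_of_mem (show v ∈ {v : X | χ v ≤ (C:ℝ)} from hvC)]
            rw [← ENNReal.ofReal_pow (abs_nonneg _), sq_abs]
            rcases le_or_gt (χ v) 2 with hv2 | hv2
            · exact le_trans (ENNReal.ofReal_le_ofReal (ell_sq (hχ0 v) hv2)) le_self_add
            · refine le_trans ?_ le_add_self
              rw [Set.indicator_of_mem (show v ∈ {v : X | 2 < χ v} from hv2)]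
              apply ENNReal.ofReal_le_ofReal
              have h0 := hχ0 v
              nlinarith
          · rw [Set.indicator_of_notMem (show v ∉ {v : X | χ v ≤ (C:ℝ)} from hvC)]
            simp
        rw [hBdef]
        refine ne_top_of_le_ne_top ?_ (lintegral_mono hpt)
        rw [lintegral_add_right _ (measurable_const.indicator hmeas2),
          lintegral_indicator_const hmeas2]
        refine ENNReal.add_ne_top.2 ⟨?_, ENNReal.mul_ne_top ENNReal.ofReal_ne_top hν2⟩
        calc ∫⁻ v, ENNReal.ofReal (4 * ell (χ v)) ∂ν
            = 4 * ∫⁻ v, ENNReal.ofReal (ell (χ v)) ∂ν := by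
              rw [← lintegral_const_mul 4 hellmeas]; congr 1; funext v
              rw [ENNReal.ofReal_mul (by norm_num)]; norm_num
          _ ≠ ⊤ := ENNReal.mul_ne_top (by norm_num) hχcost
      have hεclaim : (0:ℝ≥0∞) < (ε/2)^2 / (B + 1) := by
        apply ENNReal.div_pos
        · exact pow_ne_zero 2 (ENNReal.half_pos hε.ne').ne'
        · exact ENNReal.add_ne_top.2 ⟨hBtop, by simp⟩
      have hev1 : ∀ᶠ y in nhds y₀, ‖y - y₀‖ < 1 := by
        have hball : Metric.ball y₀ 1 ∈ nhds y₀ := Metric.ball_mem_nhds y₀ one_pos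
        filter_upwards [hball] with y hy
        rwa [Metric.mem_ball, dist_eq_norm] at hy
      have hev2 := (hcont y₀).eventually_lt_const hεclaim
      filter_upwards [hev1, hev2] with y hy1 hy2
      have hsplit : ∀ᵐ v ∂ν, ENNReal.ofReal |χ v - 1| * ENNReal.ofReal ‖G y v - G y₀ v‖ ≤
          ind1 v * ENNReal.ofReal ‖G y v - G y₀ v‖ +
          c₀ * dinv * ({v : X | (C:ℝ) < χ v}.indicator
            (fun v => ENNReal.ofReal (ell (χ v)) + W v)) v := by
        filter_upwards [hdom y, hdom y₀] with v hv1 hv2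
        by_cases hvC : χ v ≤ (C:ℝ)
        · rw [hind1def, Set.indicator_of_mem (show v ∈ {v : X | χ v ≤ (C:ℝ)} from hvC)]
          exact le_self_add
        · push_neg at hvC
          refine le_trans ?_ le_add_self
          rw [Set.indicator_of_mem (show v ∈ {v : X | (C:ℝ) < χ v} from hvC)]
          have hC2' : (2:ℝ) ≤ (C:ℝ) := by exact_mod_cast hC2
          have hv2' : 2 < χ v := lt_of_le_of_lt hC2' hvC
          have hnorm : ENNReal.ofReal ‖G y v - G y₀ v‖ ≤ c₀ * m v := by
            calc ENNReal.ofReal ‖G y v - G y₀ v‖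
                ≤ ENNReal.ofReal (‖G y v‖ + ‖G y₀ v‖) :=
                  ENNReal.ofReal_le_ofReal (norm_sub_le _ _)
              _ ≤ ENNReal.ofReal ‖G y v‖ + ENNReal.ofReal ‖G y₀ v‖ := ENNReal.ofReal_add_le
              _ ≤ ENNReal.ofReal (1 + ‖y‖) * m v + ENNReal.ofReal (1 + ‖y₀‖) * m v :=
                  add_le_add hv1 hv2
              _ = (ENNReal.ofReal (1 + ‖y‖) + ENNReal.ofReal (1 + ‖y₀‖)) * m v :=
                  (add_mul _ _ _).symm
              _ ≤ c₀ * m v := by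
                  apply mul_le_mul_left
                  rw [← ENNReal.ofReal_add (by positivity) (by positivity), hc₀def]
                  apply ENNReal.ofReal_le_ofReal
                  have hyn : ‖y‖ - ‖y₀‖ ≤ ‖y - y₀‖ := norm_sub_norm_le y y₀
                  linarith
          have habs : ENNReal.ofReal |χ v - 1| ≤ ENNReal.ofReal (χ v) := by
            apply ENNReal.ofReal_le_ofReal
            rw [abs_of_nonneg (by linarith)]
            linarith
          calc ENNReal.ofReal |χ v - 1| * ENNReal.ofReal ‖G y v - G y₀ v‖
              ≤ ENNReal.ofReal (χ v) * (c₀ * m v) :=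
                mul_le_mul habs hnorm zero_le zero_le
            _ = c₀ * (ENNReal.ofReal (χ v) * m v) := by ring
            _ ≤ c₀ * (dinv * (ENNReal.ofReal (ell (χ v)) + em v)) :=
                mul_le_mul_right (hent' _ (hχ0 v) v) _
            _ ≤ c₀ * (dinv * (ENNReal.ofReal (ell (χ v)) + W v)) :=
                mul_le_mul_right (mul_le_mul_right (add_le_add_right (hem_le_W v hv2') _) _) _
            _ = c₀ * dinv * (ENNReal.ofReal (ell (χ v)) + W v) := (mul_assoc _ _ _).symm
      have hmeas3 : Measurable fun v => c₀ * dinv * ({v : X | (C:ℝ) < χ v}.indicator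
          (fun v => ENNReal.ofReal (ell (χ v)) + W v)) v :=
        ((hellmeas.add hWmeas).indicator (measurableSet_lt measurable_const hχm)).const_mul _
      have hI1 : ∫⁻ v, ENNReal.ofReal |χ v - 1| * ENNReal.ofReal ‖G y v - G y₀ v‖ ∂ν ≤
          (∫⁻ v, ind1 v * ENNReal.ofReal ‖G y v - G y₀ v‖ ∂ν) + c₀ * dinv * τ C := by
        refine le_trans (lintegral_mono_ae hsplit) ?_
        rw [lintegral_add_right _ hmeas3, lintegral_const_mul _
          (show Measurable fun v =>
            ({v : X | (C:ℝ) < χ v}.indicator (fun v => ENNReal.ofReal (ell (χ v)) + W v)) v from (hellmeas.add hWmeas).indicator (measurableSet_lt measurable_const hχm))]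
      have hgmeasae : AEMeasurable (fun v => ENNReal.ofReal ‖G y v - G y₀ v‖) ν :=
        ENNReal.measurable_ofReal.comp_aemeasurable
          (((hGsm y).sub (hGsm y₀)).norm.aemeasurable)
      have hCS : ∫⁻ v, ind1 v * ENNReal.ofReal ‖G y v - G y₀ v‖ ∂ν ≤
          B ^ ((2:ℝ)⁻¹) * (∫⁻ v, ENNReal.ofReal (‖G y v - G y₀ v‖^2) ∂ν) ^ ((2:ℝ)⁻¹) := by
        have hconj : Real.HolderConjugate 2 2 := by
          rw [Real.holderConjugate_iff]; norm_num
        have h := ENNReal.lintegral_mul_le_Lp_mul_Lq ν hconj hind1meas.aemeasurable hgmeasae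
        simp only [Pi.mul_apply] at h
        have h2' : ∫⁻ v, (ind1 v) ^ (2:ℝ) ∂ν = B := by
          rw [hBdef]; congr 1; funext v; exact e1 _
        have h3' : ∫⁻ v, (ENNReal.ofReal ‖G y v - G y₀ v‖) ^ (2:ℝ) ∂ν
            = ∫⁻ v, ENNReal.ofReal (‖G y v - G y₀ v‖^2) ∂ν := by
          congr 1; funext v; rw [e1, ← ENNReal.ofReal_pow (norm_nonneg _)]
        rw [h2', h3', one_div] at h
        exact h
      have hterm2 : c₀ * dinv * τ C ≤ ε/2 := by
        calc c₀ * dinv * τ C ≤ c₀ * dinv * ((ε/2) / (c₀ * dinv + 1)) :=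
            mul_le_mul_right hCτ.le _
          _ ≤ (c₀ * dinv + 1) * ((ε/2) / (c₀ * dinv + 1)) :=
            mul_le_mul_left le_self_add _
          _ ≤ ε/2 := ENNReal.mul_div_le
      have hterm1 : B ^ ((2:ℝ)⁻¹) *
          (∫⁻ v, ENNReal.ofReal (‖G y v - G y₀ v‖^2) ∂ν) ^ ((2:ℝ)⁻¹) ≤ ε/2 := by
        calc B ^ ((2:ℝ)⁻¹) * (∫⁻ v, ENNReal.ofReal (‖G y v - G y₀ v‖^2) ∂ν) ^ ((2:ℝ)⁻¹)
            = (B * ∫⁻ v, ENNReal.ofReal (‖G y v - G y₀ v‖^2) ∂ν) ^ ((2:ℝ)⁻¹) :=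
              (ENNReal.mul_rpow_of_nonneg _ _ (by norm_num)).symm
          _ ≤ ((B+1) * ((ε/2)^2 / (B+1))) ^ ((2:ℝ)⁻¹) := by
              apply ENNReal.rpow_le_rpow _ (by norm_num)
              exact mul_le_mul le_self_add hy2.le zero_le zero_le
          _ ≤ ((ε/2)^2) ^ ((2:ℝ)⁻¹) := ENNReal.rpow_le_rpow ENNReal.mul_div_le (by norm_num)
          _ = ε/2 := by
              rw [← ENNReal.rpow_natCast (ε/2) 2, ← ENNReal.rpow_mul]
              norm_num
      calc ∫⁻ v, ENNReal.ofReal |χ v - 1| * ENNReal.ofReal ‖G y v - G y₀ v‖ ∂ν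
          ≤ (∫⁻ v, ind1 v * ENNReal.ofReal ‖G y v - G y₀ v‖ ∂ν) + c₀ * dinv * τ C := hI1
        _ ≤ ε/2 + ε/2 := add_le_add (le_trans hCS hterm1) hterm2
        _ = ε := ENNReal.add_halves ε
    have hb : ∀ y, ENNReal.ofReal ‖Gi y - Gi y₀‖ ≤ ∫⁻ v, ENNReal.ofReal |χ v - 1| *
        ENNReal.ofReal ‖G y v - G y₀ v‖ ∂ν := by
      intro y
      have hsub : Gi y - Gi y₀ = ∫ v, ((χ v - 1) • G y v - (χ v - 1) • G y₀ v) ∂ν :=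
        (integral_sub (hInt y) (hInt y₀)).symm
      rw [hsub]
      calc ENNReal.ofReal ‖∫ v, ((χ v - 1) • G y v - (χ v - 1) • G y₀ v) ∂ν‖
          = ‖∫ v, ((χ v - 1) • G y v - (χ v - 1) • G y₀ v) ∂ν‖ₑ := by rw [ofReal_norm]
        _ ≤ ∫⁻ v, ‖(χ v - 1) • G y v - (χ v - 1) • G y₀ v‖ₑ ∂ν :=
            enorm_integral_le_lintegral_enorm _
        _ = ∫⁻ v, ENNReal.ofReal |χ v - 1| * ENNReal.ofReal ‖G y v - G y₀ v‖ ∂ν := by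
            congr 1; funext v
            rw [← smul_sub, ← ofReal_norm, norm_smul, Real.norm_eq_abs,
              ENNReal.ofReal_mul (abs_nonneg _)]
    rw [ContinuousAt, tendsto_iff_norm_sub_tendsto_zero]
    have h1 : Tendsto (fun y => ENNReal.ofReal ‖Gi y - Gi y₀‖) (nhds y₀) (nhds 0) := by
      rw [ENNReal.tendsto_nhds_zero]
      intro ε hε
      filter_upwards [ENNReal.tendsto_nhds_zero.mp main ε hε] with y hy
      exact le_trans (hb y) hy
    have h2 := (ENNReal.tendsto_toReal (by simp)).comp h1
    have h3 : (ENNReal.toReal ∘ fun y => ENNReal.ofReal ‖Gi y - Gi y₀‖)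
        = fun y => ‖Gi y - Gi y₀‖ :=
      funext fun y => ENNReal.toReal_ofReal (norm_nonneg _)
    rw [h3] at h2
    simpa using h2
  have hrw : (fun y : Y => ∫ v, ((χ v - 1) / (1 + ‖y‖)) • G y v ∂ν)
      = fun y : Y => (1 + ‖y‖)⁻¹ • Gi y := by
    funext y
    rw [hGidef, ← MeasureTheory.integral_smul]
    congr 1; funext v
    rw [smul_smul, div_eq_inv_mul]
  rw [hrw]
  have hpos : ∀ y : Y, (1:ℝ) + ‖y‖ ≠ 0 := fun y => by positivity
  exact ((continuous_const.add continuous_norm).inv₀ hpos).smul hGicont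

/-- Under the `L²`-continuity, normalized `L²`-bound and exponential
integrability assumptions on `g`, for a control `ψ` with finite cost, the map
`y ↦ ∫_X (g(s,y,v)/(1+‖y‖))·(ψ(s,v) − 1) ν(dv)` is continuous for a.e. `s ∈ [0,T]`. -/
theorem ae_continuity_of_controlled_drift
    (T : ℝ) (hT : 0 < T) (d : ℕ)
    {X : Type*} [MeasurableSpace X] (ν : Measure X) [SigmaFinite ν]
    (g : ℝ × EuclideanSpace ℝ (Fin d) × X → EuclideanSpace ℝ (Fin d))
    (hgmeas : Measurable g)
    -- (a) `g(s,y,·) ∈ L²(X,ν;ℝ^d)` and `y ↦ g(s,y,·)` is continuous into `L²`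
    (hgL2 : ∀ s ∈ Icc (0:ℝ) T, ∀ y : EuclideanSpace ℝ (Fin d),
      MemLp (fun v => g (s, y, v)) 2 ν)
    (hgcont : ∀ s ∈ Icc (0:ℝ) T, ∀ y : EuclideanSpace ℝ (Fin d),
      Filter.Tendsto (fun y' => ∫⁻ v, ENNReal.ofReal (‖g (s, y', v) - g (s, y, v)‖ ^ 2) ∂ν)
        (nhds y) (nhds 0))
    -- (b) uniform `L²` bound on `‖g(s,v)‖₀ = sup_y ‖g(s,y,v)‖/(1+‖y‖)`
    (κ : ℝ) (hκ : 0 < κ)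
    (hg0 : ∀ s ∈ Icc (0:ℝ) T,
      ∫⁻ v, (⨆ y : EuclideanSpace ℝ (Fin d),
        ENNReal.ofReal (‖g (s, y, v)‖ / (1 + ‖y‖))) ^ 2 ∂ν ≤ ENNReal.ofReal κ)
    -- (c) exponential integrability of `‖g(s,v)‖₀`
    (hexp : ∃ δ₀ : ℝ, 0 < δ₀ ∧ ∀ E : Set (ℝ × X), MeasurableSet E → nuT T ν E < ⊤ →
      ∫⁻ p in E, ⨆ y : EuclideanSpace ℝ (Fin d),
        ENNReal.ofReal (Real.exp (δ₀ * (‖g (p.1, y, p.2)‖ / (1 + ‖y‖)))) ∂(nuT T ν) < ⊤)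
    -- control with finite cost
    (ψ : ℝ × X → ℝ) (hψmeas : Measurable ψ) (hψnonneg : ∀ p, 0 ≤ ψ p)
    (hψcost : ∫⁻ p, ENNReal.ofReal (ell (ψ p)) ∂(nuT T ν) < ⊤) :
    ∀ᵐ s ∂(volume.restrict (Icc (0:ℝ) T)),
      Continuous (fun y : EuclideanSpace ℝ (Fin d) =>
        ∫ v, ((ψ (s, v) - 1) / (1 + ‖y‖)) • g (s, y, v) ∂ν) := by
  classical
  obtain ⟨δ, hδ, hexp'⟩ := hexp
  obtain ⟨D, hD⟩ := TopologicalSpace.exists_dense_seq (EuclideanSpace ℝ (Fin d))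
  set r : ℝ × X → ℕ → ℝ := fun p n => ‖g (p.1, D n, p.2)‖ / (1 + ‖D n‖) with hrdef
  have hr0 : ∀ p n, 0 ≤ r p n := fun p n => div_nonneg (norm_nonneg _) (by positivity)
  have hrmeas : ∀ n, Measurable fun p => r p n := by
    intro n
    apply Measurable.div_const
    exact (hgmeas.comp (measurable_fst.prodMk (measurable_const.prodMk measurable_snd))).norm
  set Mp : ℝ × X → ℝ≥0∞ := fun p => ⨆ n, ENNReal.ofReal (r p n) with hMpdef
  set emp : ℝ × X → ℝ≥0∞ := fun p => ⨆ n, ENNReal.ofReal (Real.exp (δ * r p n)) with hempdef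
  have hMpmeas : Measurable Mp :=
    Measurable.iSup fun n => ENNReal.measurable_ofReal.comp (hrmeas n)
  have hempmeas : Measurable emp :=
    Measurable.iSup fun n => ENNReal.measurable_ofReal.comp
      ((Real.measurable_exp).comp ((hrmeas n).const_mul δ))
  -- Mp is below the full supremum
  have hMle : ∀ p : ℝ × X, Mp p ≤
      ⨆ y : EuclideanSpace ℝ (Fin d), ENNReal.ofReal (‖g (p.1, y, p.2)‖ / (1 + ‖y‖)) :=
    fun p => iSup_le fun n => le_iSup_of_le (D n) le_rfl
  have hemle : ∀ p : ℝ × X, emp p ≤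
      ⨆ y : EuclideanSpace ℝ (Fin d), ENNReal.ofReal (Real.exp (δ * (‖g (p.1, y, p.2)‖ / (1 + ‖y‖)))) :=
    fun p => iSup_le fun n => le_iSup_of_le (D n) le_rfl
  -- pointwise domination along the dense sequence
  have hDdom : ∀ (s : ℝ) (v : X) (n : ℕ),
      ENNReal.ofReal ‖g (s, D n, v)‖ ≤ ENNReal.ofReal (1 + ‖D n‖) * Mp (s, v) := by
    intro s v n
    have hpos : (0:ℝ) < 1 + ‖D n‖ := by positivity
    have heq : ‖g (s, D n, v)‖ = (1 + ‖D n‖) * r (s, v) n := by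
      rw [hrdef]; field_simp
    rw [heq, ENNReal.ofReal_mul hpos.le]
    exact mul_le_mul_right (le_iSup (fun n => ENNReal.ofReal (r (s,v) n)) n) _
  -- pointwise entropy inequality
  have hent : ∀ (s : ℝ) (v : X) (a : ℝ), 0 ≤ a →
      ENNReal.ofReal a * (ENNReal.ofReal δ * Mp (s, v)) ≤
      ENNReal.ofReal (ell a) + emp (s, v) := by
    intro s v a ha
    rw [hMpdef]
    simp only [ENNReal.mul_iSup]
    apply iSup_le
    intro n
    calc ENNReal.ofReal a * (ENNReal.ofReal δ * ENNReal.ofReal (r (s,v) n))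
        = ENNReal.ofReal (a * (δ * r (s,v) n)) := by
          rw [← ENNReal.ofReal_mul hδ.le, ← ENNReal.ofReal_mul ha]
      _ ≤ ENNReal.ofReal (ell a + Real.exp (δ * r (s,v) n)) :=
          ENNReal.ofReal_le_ofReal (ell_entropy _ ha)
      _ ≤ ENNReal.ofReal (ell a) + ENNReal.ofReal (Real.exp (δ * r (s,v) n)) :=
          ENNReal.ofReal_add_le
      _ ≤ ENNReal.ofReal (ell a) + emp (s, v) :=
          add_le_add_right (le_iSup (fun n => ENNReal.ofReal (Real.exp (δ * r (s,v) n))) n) _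
  -- smallness
  have hsmall : ∀ (s : ℝ) (v : X), Mp (s, v) < 1 → emp (s, v) ≤ ENNReal.ofReal (Real.exp δ) := by
    intro s v hm1
    apply iSup_le
    intro n
    apply ENNReal.ofReal_le_ofReal
    apply Real.exp_le_exp.2
    have hr1 : r (s,v) n < 1 := by
      have := lt_of_le_of_lt (le_iSup (fun n => ENNReal.ofReal (r (s,v) n)) n) hm1
      rwa [ENNReal.ofReal_lt_one] at this
    nlinarith [hr0 (s,v) n]
  -- L² bound for slices
  have hb' : ∀ s ∈ Icc (0:ℝ) T, ∫⁻ v, (Mp (s, v))^2 ∂ν ≤ ENNReal.ofReal κ := by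
    intro s hs
    refine le_trans (lintegral_mono fun v => ?_) (hg0 s hs)
    exact pow_le_pow_left' (hMle (s, v)) 2
  -- Fubini for the cost
  have hmeascost : Measurable fun p : ℝ × X => ENNReal.ofReal (ell (ψ p)) :=
    ENNReal.measurable_ofReal.comp (measurable_ell.comp hψmeas)
  have hcost' : ∀ᵐ s ∂(volume.restrict (Icc (0:ℝ) T)),
      ∫⁻ v, ENNReal.ofReal (ell (ψ (s, v))) ∂ν < ⊤ := by
    have heq := lintegral_prod (μ := volume.restrict (Icc (0:ℝ) T)) (ν := ν)
      (fun p => ENNReal.ofReal (ell (ψ p))) hmeascost.aemeasurable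
    unfold nuT at hψcost
    rw [heq] at hψcost
    exact ae_lt_top (Measurable.lintegral_prod_right (f := fun s v =>
      ENNReal.ofReal (ell (ψ (s, v)))) (by exact hmeascost)) hψcost.ne
  -- nuT-measure of {1 ≤ Mp} is finite
  have hMT : ∫⁻ p, (Mp p)^2 ∂(nuT T ν) ≤ ENNReal.ofReal κ * ENNReal.ofReal T := by
    unfold nuT
    rw [lintegral_prod _ (hMpmeas.pow_const 2).aemeasurable]
    calc ∫⁻ s, ∫⁻ v, (Mp (s, v))^2 ∂ν ∂(volume.restrict (Icc (0:ℝ) T))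
        ≤ ∫⁻ _, ENNReal.ofReal κ ∂(volume.restrict (Icc (0:ℝ) T)) := by
          apply lintegral_mono_ae
          filter_upwards [ae_restrict_mem measurableSet_Icc] with s hs
          exact hb' s hs
      _ = ENNReal.ofReal κ * ENNReal.ofReal T := by
          rw [lintegral_const, Measure.restrict_apply_univ, Real.volume_Icc]
          simp
  have hE1meas : MeasurableSet {p : ℝ × X | 1 ≤ Mp p} := hMpmeas measurableSet_Ici
  have hE1fin : nuT T ν {p : ℝ × X | 1 ≤ Mp p} < ⊤ := by
    have h1 : nuT T ν {p : ℝ × X | 1 ≤ Mp p} ≤ ∫⁻ p, (Mp p)^2 ∂(nuT T ν) := by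
      have h2 : nuT T ν {p : ℝ × X | 1 ≤ Mp p} =
          ∫⁻ p in {p : ℝ × X | 1 ≤ Mp p}, 1 ∂(nuT T ν) := (setLIntegral_one _).symm
      rw [h2]
      refine le_trans (setLIntegral_mono (hMpmeas.pow_const 2) fun p hp => ?_)
        (setLIntegral_le_lintegral _ _)
      calc (1:ℝ≥0∞) = 1 * 1 := (one_mul 1).symm
        _ ≤ Mp p * Mp p := mul_le_mul' hp hp
        _ = (Mp p)^2 := (sq (Mp p)).symm
    exact lt_of_le_of_lt (le_trans h1 hMT)
      (ENNReal.mul_lt_top ENNReal.ofReal_lt_top ENNReal.ofReal_lt_top)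
  -- exponential integrability on {1 ≤ Mp}
  have hexpint : ∫⁻ p in {p : ℝ × X | 1 ≤ Mp p}, emp p ∂(nuT T ν) < ⊤ :=
    lt_of_le_of_lt (lintegral_mono fun p => hemle p) (hexp' _ hE1meas hE1fin)
  have hindmeas : Measurable fun p : ℝ × X => ({p : ℝ × X | 1 ≤ Mp p}.indicator emp) p :=
    hempmeas.indicator hE1meas
  have hem' : ∀ᵐ s ∂(volume.restrict (Icc (0:ℝ) T)),
      ∫⁻ v, ({p : ℝ × X | 1 ≤ Mp p}.indicator emp) (s, v) ∂ν < ⊤ := by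
    have heq := lintegral_prod (μ := volume.restrict (Icc (0:ℝ) T)) (ν := ν)
      (fun p => ({p : ℝ × X | 1 ≤ Mp p}.indicator emp) p) hindmeas.aemeasurable
    rw [← lintegral_indicator hE1meas] at hexpint
    unfold nuT at hexpint
    rw [heq] at hexpint
    exact ae_lt_top (Measurable.lintegral_prod_right (f := fun s v =>
      ({p : ℝ × X | 1 ≤ Mp p}.indicator emp) (s, v)) (by exact hindmeas)) hexpint.ne
  -- conclude for a.e. s
  filter_upwards [hcost', hem', ae_restrict_mem measurableSet_Icc] with s hs1 hs2 hs
  have hGsm : ∀ y : EuclideanSpace ℝ (Fin d),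
      AEStronglyMeasurable (fun v => g (s, y, v)) ν := fun y =>
    (hgmeas.comp (measurable_const.prodMk (measurable_const.prodMk
      measurable_id))).aestronglyMeasurable
  have hmSlice : Measurable fun v => Mp (s, v) := hMpmeas.comp measurable_prodMk_left
  have hemSlice : Measurable fun v => emp (s, v) := hempmeas.comp measurable_prodMk_left
  have hm2 : ∫⁻ v, (Mp (s, v))^2 ∂ν ≠ ⊤ :=
    ne_top_of_le_ne_top ENNReal.ofReal_ne_top (hb' s hs)
  have hnmeas : ∀ y y' : EuclideanSpace ℝ (Fin d),
      AEMeasurable (fun v => ENNReal.ofReal (‖g (s, y, v) - g (s, y', v)‖^2)) ν := by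
    intro y y'
    apply Measurable.aemeasurable
    apply ENNReal.measurable_ofReal.comp
    apply Measurable.pow_const
    exact ((hgmeas.comp (measurable_const.prodMk (measurable_const.prodMk
      measurable_id))).sub (hgmeas.comp (measurable_const.prodMk
      (measurable_const.prodMk measurable_id)))).norm
  have hdom : ∀ y : EuclideanSpace ℝ (Fin d), ∀ᵐ v ∂ν,
      ENNReal.ofReal ‖g (s, y, v)‖ ≤ ENNReal.ofReal (1 + ‖y‖) * Mp (s, v) :=
    ae_norm_le_of_dense (fun y v => g (s, y, v)) D hD (fun v => Mp (s, v)) hmSlice hm2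
      hnmeas (fun n v => hDdom s v n) (hgcont s hs)
  have hemint : ∫⁻ v in {v : X | 1 ≤ Mp (s, v)}, emp (s, v) ∂ν ≠ ⊤ := by
    have heq2 : ∫⁻ v in {v : X | 1 ≤ Mp (s, v)}, emp (s, v) ∂ν =
        ∫⁻ v, ({p : ℝ × X | 1 ≤ Mp p}.indicator emp) (s, v) ∂ν := by
      rw [← lintegral_indicator (show MeasurableSet {v : X | 1 ≤ Mp (s, v)} from
        hmSlice measurableSet_Ici)]
      congr 1
    rw [heq2]
    exact hs2.ne
  exact slice_continuity δ hδ (fun y v => g (s, y, v)) hGsm (fun v => Mp (s, v))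
    (fun v => emp (s, v)) hmSlice hemSlice hdom (fun a ha v => hent s v a ha)
    (fun v => hsmall s v) hm2 hemint (fun v => ψ (s, v))
    (hψmeas.comp measurable_prodMk_left) (fun v => hψnonneg (s, v))
    hs1.ne (hgcont s hs)
end
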